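/- arXiv:1909.07964 — 4 statements merged into one kernel-verified Lean document; each statement's English description precedes it below -/
import Mathlib

section
/- Let 𝒫 = {P_1,…,P_k} and 𝒬 = {Q_1,…,Q_k} be two semi-edge-disjoint sets of paths in a graph such that for each i the last edge of P_i equals the first edge of Q_i, and for all i, j, |E(P_i) ∩ E(Q_j)| ≤ 1. Then the set of paths formed by concatenating P_i and Q_i for each i (leaving out the duplicate edge) is semi-edge-disjoint. -/
/-- A multigraph: a type of vertices, a type of edges, an endpoints map,
and no loops. Parallel edges are allowed. -/
structure MG : Type 1 where
  V : Type
  E : Type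
  ends : E → Sym2 V
  noLoop : ∀ e, ¬ (ends e).IsDiag

namespace MG

/-- Two vertices are adjacent if some edge joins them. -/
def Adjv (G : MG) (x y : G.V) : Prop := ∃ e, G.ends e = s(x, y)

/-- Isomorphism of multigraphs. -/
def Iso (G H : MG) : Prop :=
  ∃ (fv : G.V ≃ H.V) (fe : G.E ≃ H.E), ∀ e, H.ends (fe e) = Sym2.map fv (G.ends e)

/-- `H` is (isomorphic to) a subgraph of `G`. -/
def IsSubgraphOf (H G : MG) : Prop :=
  ∃ (fv : H.V ↪ G.V) (fe : H.E ↪ G.E), ∀ e, G.ends (fe e) = Sym2.map fv (H.ends e)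

/-- The multigraph obtained from `G` by deleting the edges `e₁, e₂` and adding a
new edge with endpoints `u, w`. -/
def splitOff (G : MG) (e₁ e₂ : G.E) (u w : G.V) (huw : u ≠ w) : MG where
  V := G.V
  E := {e : G.E // e ≠ e₁ ∧ e ≠ e₂} ⊕ Unit
  ends := fun x => match x with
    | Sum.inl e => G.ends e.1
    | Sum.inr _ => s(u, w)
  noLoop := by
    rintro (e | e)
    · exact G.noLoop e.1
    · simpa [Sym2.mk_isDiag_iff] using huw

/-- `G'` is obtained from `G` by splitting off one pair of adjacent edges. -/
def SplitStep (G G' : MG) : Prop :=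
  ∃ (e₁ e₂ : G.E) (u v w : G.V) (huw : u ≠ w),
    e₁ ≠ e₂ ∧ G.ends e₁ = s(u, v) ∧ G.ends e₂ = s(v, w) ∧
      Iso G' (G.splitOff e₁ e₂ u w huw)

/-- `G` has an `H`-immersion: `H` can be obtained from a subgraph of `G` by
splitting off pairs of adjacent edges and removing isolated vertices. -/
def Immersion (G H : MG) : Prop :=
  ∃ G₀ G₁ : MG, G₀.IsSubgraphOf G ∧ Relation.ReflTransGen SplitStep G₀ G₁ ∧
    ∃ (fv : H.V ↪ G₁.V) (fe : H.E ≃ G₁.E),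
      (∀ e, G₁.ends (fe e) = Sym2.map fv (H.ends e)) ∧
      ∀ v : G₁.V, v ∉ Set.range fv → ∀ e, v ∉ G₁.ends e

/-- A set of vertices induces a connected subgraph. -/
def ConnIn (G : MG) (S : Set G.V) : Prop :=
  ∀ a ∈ S, ∀ b ∈ S, Relation.ReflTransGen (fun x y => x ∈ S ∧ y ∈ S ∧ G.Adjv x y) a b

/-- `G` has an `H`-minor (branch set formulation of contracting edges in a
subgraph of `G`). -/
def Minor (G H : MG) : Prop :=
  ∃ β : H.V → Set G.V,
    (∀ u, (β u).Nonempty) ∧ (∀ u, G.ConnIn (β u)) ∧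
    (Pairwise fun u v => Disjoint (β u) (β v)) ∧
    ∃ η : H.E ↪ G.E, ∀ e u v, H.ends e = s(u, v) →
      ∃ a ∈ β u, ∃ b ∈ β v, G.ends (η e) = s(a, b)

/-- `G` is a connected multigraph. -/
def Connected (G : MG) : Prop :=
  Nonempty G.V ∧ ∀ a b : G.V, Relation.ReflTransGen G.Adjv a b

/-- The degree of `v` is at least `k`. -/
def degGE (G : MG) (v : G.V) (k : ℕ) : Prop :=
  Nonempty (Fin k ↪ {e : G.E // v ∈ G.ends e})

/-- The line graph of a multigraph: a vertex for each edge, two vertices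
adjacent iff the corresponding edges share an endpoint. -/
def lineGraph (G : MG) : SimpleGraph G.E where
  Adj e f := e ≠ f ∧ ∃ v, v ∈ G.ends e ∧ v ∈ G.ends f
  symm := ⟨by rintro e f ⟨h, v, h1, h2⟩; exact ⟨Ne.symm h, v, h2, h1⟩⟩
  loopless := ⟨by rintro e ⟨h, _⟩; exact h rfl⟩

/-- `mG`: each edge of `G` is replaced by `m` parallel copies. -/
def mul (G : MG) (m : ℕ) : MG where
  V := G.V
  E := G.E × Fin m
  ends := fun p => G.ends p.1
  noLoop := fun p => G.noLoop p.1

/-- `G` has a proper edge colouring with `n` colours. -/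
def EdgeColorable (G : MG) (n : ℕ) : Prop :=
  ∃ C : G.E → Fin n, ∀ e f, e ≠ f → (∃ v, v ∈ G.ends e ∧ v ∈ G.ends f) → C e ≠ C f

/-- The chromatic index of `G`. -/
noncomputable def chromIndex (G : MG) : ℕ := sInf {n | G.EdgeColorable n}

/-- A path between edges: a nonempty sequence of distinct edges in which
consecutive edges are adjacent (this corresponds exactly to a path in the
line graph). -/
structure EPath (G : MG) where
  edges : List G.E
  ne : edges ≠ []
  nodup : edges.Nodup
  chain : edges.Chain' fun a b => ∃ v, v ∈ G.ends a ∧ v ∈ G.ends b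

/-- First edge of an edge-path. -/
def EPath.firstE {G : MG} (P : EPath G) : G.E := P.edges.head P.ne

/-- Last edge of an edge-path. -/
def EPath.lastE {G : MG} (P : EPath G) : G.E := P.edges.getLast P.ne

/-- The (unordered) pair of edges `p` occurs consecutively in `P`; that is,
the corresponding 2-edge path is a subpath of `P`. -/
def EPath.Adj2 {G : MG} (P : EPath G) (p : Sym2 G.E) : Prop :=
  ∃ l₁ a b l₂, P.edges = l₁ ++ a :: b :: l₂ ∧ p = s(a, b)

/-- A set of paths is semi-edge-disjoint: every 2-edge path is a subpath of at
most one path of the set. -/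
def SED (G : MG) (S : Set (EPath G)) : Prop :=
  ∀ P ∈ S, ∀ Q ∈ S, ∀ p, P.Adj2 p → Q.Adj2 p → P = Q

/-- `H` contains `t` distinct edges and a path between each pair of them such
that this set of paths is semi-edge-disjoint. -/
def CliqueSED (H : MG) (t : ℕ) : Prop :=
  ∃ (f : Fin t ↪ H.E) (P : (i j : Fin t) → i < j → EPath H),
    (∀ i j h, (P i j h).firstE = f i ∧ (P i j h).lastE = f j) ∧
    H.SED {Q | ∃ i j h, Q = P i j h}

/-- A path in a multigraph, recorded by its vertex sequence (without
repetitions) and edge sequence. -/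
structure VPath (G : MG) where
  verts : List G.V
  edges : List G.E
  hlen : verts.length = edges.length + 1
  nodup : verts.Nodup
  hends : ∀ (i : ℕ) (h : i < edges.length),
    G.ends (edges.get ⟨i, h⟩) =
      s(verts.get ⟨i, by omega⟩, verts.get ⟨i + 1, by omega⟩)

/-- First vertex of a path. -/
def VPath.first {G : MG} (P : VPath G) : G.V :=
  P.verts.head (by have h := P.hlen; intro hnil; rw [hnil] at h; simp at h)

/-- Last vertex of a path. -/
def VPath.last {G : MG} (P : VPath G) : G.V :=
  P.verts.getLast (by have h := P.hlen; intro hnil; rw [hnil] at h; simp at h)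

/-- A cycle in a multigraph: distinct vertices `v 0, …, v (n-1)` and distinct
edges `e 0, …, e (n-1)` with `e i` joining `v i` to `v (i+1 mod n)`. -/
structure Cycle (G : MG) where
  n : ℕ
  hn : 2 ≤ n
  v : Fin n → G.V
  e : Fin n → G.E
  vinj : Function.Injective v
  einj : Function.Injective e
  hends : ∀ i : Fin n,
    G.ends (e i) =
      s(v i, v ⟨(i.1 + 1) % n, Nat.mod_lt _ (Nat.lt_of_le_of_lt (Nat.zero_le _) i.isLt)⟩)

/-- `G` has a topological `H`-minor: branch vertices joined by internally
disjoint paths. -/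
def TopMinor (G H : MG) : Prop :=
  ∃ (fv : H.V ↪ G.V) (P : H.E → VPath G),
    (∀ e, s((P e).first, (P e).last) = Sym2.map fv (H.ends e)) ∧
    (∀ e, ∀ x ∈ (P e).verts.tail.dropLast, x ∉ Set.range fv) ∧
    (∀ e f, e ≠ f → ∀ x, x ∈ (P e).verts → x ∈ (P f).verts → x ∈ Set.range fv) ∧
    (∀ e f, e ≠ f → ∀ x ∈ (P e).edges, x ∉ (P f).edges)

/-- A set of edges spans a connected subgraph. -/
def ConnEdges (G : MG) (S : Set G.E) : Prop :=
  ∀ e ∈ S, ∀ f ∈ S,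
    Relation.ReflTransGen (fun a b => a ∈ S ∧ b ∈ S ∧ ∃ v, v ∈ G.ends a ∧ v ∈ G.ends b) e f

end MG

/-- A simple graph regarded as a multigraph. -/
def SimpleGraph.toMG {V : Type} (G : SimpleGraph V) : MG where
  V := V
  E := G.edgeSet
  ends := fun e => e.1
  noLoop := fun e => G.not_isDiag_of_mem_edgeSet e.2

/-- The complete graph `K_t` as a multigraph. -/
def completeMG (t : ℕ) : MG := (⊤ : SimpleGraph (Fin t)).toMG

lemma adj2_index {G : MG} (R : MG.EPath G) {n : ℕ} (h : n + 1 < R.edges.length) :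
    R.Adj2 s(R.edges[n], R.edges[n+1]) := by
  refine ⟨R.edges.take n, R.edges[n], R.edges[n+1], R.edges.drop (n+2), ?_, rfl⟩
  conv_lhs => rw [← List.take_append_drop n R.edges]
  congr 1
  rw [List.drop_eq_getElem_cons (by omega : n < R.edges.length),
    List.drop_eq_getElem_cons h]

lemma adj2_elim {G : MG} (R : MG.EPath G) {p : Sym2 G.E} (h : R.Adj2 p) :
    ∃ n, ∃ hn : n + 1 < R.edges.length, p = s(R.edges[n], R.edges[n+1]) := by
  obtain ⟨l₁, a, b, l₂, he, hp⟩ := h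
  have hlen : l₁.length + 1 < R.edges.length := by rw [he]; simp
  refine ⟨l₁.length, hlen, ?_⟩
  have ha : R.edges[l₁.length]'(by omega) = a := by
    rw [List.getElem_of_eq he, List.getElem_append_right (le_refl _)]; simp
  have hb : R.edges[l₁.length + 1]'hlen = b := by
    rw [List.getElem_of_eq he, List.getElem_append_right (by omega)]; simp
  rw [hp, ha, hb]

lemma adj2_mem {G : MG} (R : MG.EPath G) {p : Sym2 G.E} (h : R.Adj2 p) :
    (∀ x ∈ p, x ∈ R.edges) ∧ ¬ p.IsDiag := by
  obtain ⟨n, hn, rfl⟩ := adj2_elim R h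
  refine ⟨?_, ?_⟩
  · intro x hx
    rw [Sym2.mem_iff] at hx
    rcases hx with rfl | rfl <;> exact List.getElem_mem _
  · rw [Sym2.mk_isDiag_iff]
    intro he
    have := R.nodup.getElem_inj_iff.mp he
    omega

lemma adj2_cross {G : MG} (Pp Qq : MG.EPath G) {p : Sym2 G.E}
    (h1 : Pp.Adj2 p) (h2 : Qq.Adj2 p)
    (hint : ∀ a b, a ∈ Pp.edges → a ∈ Qq.edges → b ∈ Pp.edges → b ∈ Qq.edges → a = b) :
    False := by
  obtain ⟨n, hn, rfl⟩ := adj2_elim Pp h1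
  obtain ⟨hm2, -⟩ := adj2_mem Qq h2
  have hne : Pp.edges[n] ≠ Pp.edges[n+1] := fun he => by
    have := Pp.nodup.getElem_inj_iff.mp he; omega
  exact hne (hint _ _ (List.getElem_mem _) (hm2 _ (Sym2.mem_mk_left _ _))
    (List.getElem_mem _) (hm2 _ (Sym2.mem_mk_right _ _)))

lemma getElem_idx {α} (l : List α) {i j : ℕ} (h : i = j)
    {hi : i < l.length} {hj : j < l.length} : l[i] = l[j] := by subst h; rfl

lemma adj2_concat {G : MG} (R Pp Qq : MG.EPath G)
    (he : R.edges = Pp.edges ++ Qq.edges.tail)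
    (hl : Pp.lastE = Qq.firstE) {p : Sym2 G.E} (h : R.Adj2 p) :
    Pp.Adj2 p ∨ Qq.Adj2 p := by
  obtain ⟨n, hn, rfl⟩ := adj2_elim R h
  have hlp : 0 < Pp.edges.length := List.length_pos_iff.mpr Pp.ne
  have hlq : 0 < Qq.edges.length := List.length_pos_iff.mpr Qq.ne
  have hlen : R.edges.length = Pp.edges.length + Qq.edges.length - 1 := by
    rw [he]; simp; omega
  by_cases h1 : n + 1 < Pp.edges.length
  · left
    have ha : R.edges[n]'(by omega) = Pp.edges[n]'(by omega) := by
      rw [List.getElem_of_eq he]; exact List.getElem_append_left (by omega)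
    have hb : R.edges[n+1]'hn = Pp.edges[n+1]'h1 := by
      rw [List.getElem_of_eq he]; exact List.getElem_append_left h1
    rw [ha, hb]; exact adj2_index Pp h1
  · right
    have h2 : Pp.edges.length ≤ n + 1 := by omega
    have hm1 : n + 1 - Pp.edges.length + 1 < Qq.edges.length := by omega
    have hb : R.edges[n+1]'hn = Qq.edges[n + 1 - Pp.edges.length + 1]'hm1 := by
      rw [List.getElem_of_eq he, List.getElem_append_right h2, List.getElem_tail]
    have ha : R.edges[n]'(by omega) = Qq.edges[n + 1 - Pp.edges.length]'(by omega) := by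
      rcases Nat.lt_or_ge n Pp.edges.length with hc | hc
      · calc R.edges[n]'(by omega)
            = Pp.edges[n]'hc := by
              rw [List.getElem_of_eq he]; exact List.getElem_append_left hc
          _ = Pp.edges[Pp.edges.length - 1]'(by omega) := getElem_idx _ (by omega)
          _ = Pp.lastE := (List.getLast_eq_getElem _).symm
          _ = Qq.firstE := hl
          _ = Qq.edges[0]'(by omega) := List.head_eq_getElem _
          _ = Qq.edges[n + 1 - Pp.edges.length]'(by omega) := getElem_idx _ (by omega)
      · calc R.edges[n]'(by omega)
            = Qq.edges.tail[n - Pp.edges.length]'(by simp; omega) := by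
              rw [List.getElem_of_eq he]; exact List.getElem_append_right hc
          _ = Qq.edges[n - Pp.edges.length + 1]'(by simp at *; omega) := List.getElem_tail ..
          _ = Qq.edges[n + 1 - Pp.edges.length]'(by omega) := getElem_idx _ (by omega)
    rw [ha, hb]
    exact adj2_index Qq hm1

/-- concatenating paired paths from two semi-edge-disjoint sets of
paths, where the last edge of `P i` is the first edge of `Q i` and
`|E(P i) ∩ E(Q j)| ≤ 1`, yields a semi-edge-disjoint set of paths. -/
theorem sed_concat (G : MG) (k : ℕ) (P Q : Fin k → MG.EPath G)
    (hPinj : Function.Injective P) (hQinj : Function.Injective Q)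
    (hPsed : G.SED (Set.range P)) (hQsed : G.SED (Set.range Q))
    (hlink : ∀ i, (P i).lastE = (Q i).firstE)
    (hint : ∀ i j, ∀ a b, a ∈ (P i).edges → a ∈ (Q j).edges →
      b ∈ (P i).edges → b ∈ (Q j).edges → a = b) :
    ∃ S : Fin k → MG.EPath G,
      (∀ i, (S i).edges = (P i).edges ++ (Q i).edges.tail) ∧
      G.SED (Set.range S) := by
  have hPint : ∀ i, ∀ a ∈ (P i).edges, a ∈ (Q i).edges → a = (Q i).firstE := by
    intro i a ha haq
    rw [← hlink i]
    refine hint i i a (P i).lastE ha haq (List.getLast_mem _) ?_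
    rw [hlink i]; exact List.head_mem _
  have hQcons : ∀ i, (Q i).edges = (Q i).firstE :: (Q i).edges.tail := fun i =>
    (List.cons_head_tail (Q i).ne).symm
  have hS : ∀ i, ∃ R : MG.EPath G, R.edges = (P i).edges ++ (Q i).edges.tail := by
    intro i
    refine ⟨⟨(P i).edges ++ (Q i).edges.tail, by simp [(P i).ne], ?_, ?_⟩, rfl⟩
    · refine List.Nodup.append (P i).nodup ((Q i).nodup.tail) ?_
      intro a ha hta
      have h1 : a = (Q i).firstE := hPint i a ha (List.mem_of_mem_tail hta)
      subst h1
      have h2 := (Q i).nodup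
      rw [hQcons i] at h2
      exact (List.nodup_cons.mp h2).1 hta
    · rw [List.Chain', List.isChain_append]
      refine ⟨(P i).chain, List.IsChain.tail (Q i).chain, ?_⟩
      intro x hx y hy
      have hx' : x = (P i).lastE := by
        rw [List.getLast?_eq_getLast (P i).ne] at hx
        simpa [MG.EPath.lastE] using hx.symm
      have hc := (Q i).chain
      rw [hQcons i] at hc
      rcases ht : (Q i).edges.tail with _ | ⟨c, rest⟩
      · rw [ht] at hy; simp at hy
      · rw [ht] at hy hc
        simp at hy
        subst hy
        subst hx'
        rw [hlink i]
        exact (List.isChain_cons_cons.mp hc).1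
  choose S hSe using hS
  refine ⟨S, hSe, ?_⟩
  rintro _ ⟨i, rfl⟩ _ ⟨j, rfl⟩ p hpi hpj
  suffices h : i = j by rw [h]
  rcases adj2_concat (S i) (P i) (Q i) (hSe i) (hlink i) hpi with hi1 | hi1 <;>
    rcases adj2_concat (S j) (P j) (Q j) (hSe j) (hlink j) hpj with hj1 | hj1
  · exact hPinj (hPsed _ ⟨i, rfl⟩ _ ⟨j, rfl⟩ p hi1 hj1)
  · exact absurd (adj2_cross (P i) (Q j) hi1 hj1 (hint i j)) not_false
  · exact absurd (adj2_cross (P j) (Q i) hj1 hi1 (hint j i)) not_false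
  · exact hQinj (hQsed _ ⟨i, rfl⟩ _ ⟨j, rfl⟩ p hi1 hj1)
end

section
/- Let H be a graph such that G = L(H) satisfies the Abu-Khzam–Langston property (χ(G) ≥ t implies G has a K_t-immersion, for all t). Then for any m ≥ 2, L(mH) satisfies the Abu-Khzam–Langston property. -/
/-- A graph satisfies the Abu-Khzam--Langston property if `χ(G) ≥ t` implies
that `G` has a `K_t`-immersion, for every `t`. -/
def AKLProp {V : Type} (G : SimpleGraph V) : Prop :=
  ∀ t : ℕ, (t : ℕ∞) ≤ G.chromaticNumber →
    MG.Immersion (SimpleGraph.toMG G) (completeMG t)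

attribute [reducible] SimpleGraph.toMG completeMG MG.splitOff MG.mul

section Basics
open MG

theorem Sym2.exists_pair {α} (p : Sym2 α) : ∃ q : α × α, s(q.1, q.2) = p :=
  p.inductionOn fun x y => ⟨(x, y), rfl⟩

noncomputable def orient {α} (p : Sym2 α) : α × α := (Sym2.exists_pair p).choose

theorem orient_spec {α} (p : Sym2 α) : s((orient p).1, (orient p).2) = p :=
  (Sym2.exists_pair p).choose_spec

namespace MG

noncomputable def o1 (G : MG) (e : G.E) : G.V := (orient (G.ends e)).1
noncomputable def o2 (G : MG) (e : G.E) : G.V := (orient (G.ends e)).2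

theorem ends_o (G : MG) (e : G.E) : G.ends e = s(G.o1 e, G.o2 e) :=
  (orient_spec (G.ends e)).symm

theorem o_ne (G : MG) (e : G.E) : G.o1 e ≠ G.o2 e := by
  intro h
  have := G.noLoop e
  rw [G.ends_o e, Sym2.mk_isDiag_iff] at this
  exact this h

theorem sym2_map_map {α β γ} (g : β → γ) (f : α → β) (p : Sym2 α) :
    Sym2.map g (Sym2.map f p) = Sym2.map (fun x => g (f x)) p :=
  p.inductionOn fun _ _ => rfl

theorem sym2_map_id' {α} (f : α → α) (hf : ∀ x, f x = x) (p : Sym2 α) :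
    Sym2.map f p = p := by
  have : f = id := funext hf
  rw [this, Sym2.map_id]; rfl

theorem sym2_map_refl {α} (p : Sym2 α) : Sym2.map (⇑(Equiv.refl α)) p = p :=
  sym2_map_id' _ (fun _ => rfl) p

theorem pfst {α β} {x y : α × β} (h : x = y) : x.1 = y.1 := congrArg Prod.fst h
theorem psnd {α β} {x y : α × β} (h : x = y) : x.2 = y.2 := congrArg Prod.snd h

theorem Iso.refl (G : MG) : Iso G G :=
  ⟨Equiv.refl _, Equiv.refl _, fun e => by simp⟩

theorem Iso.symm {G H : MG} (h : Iso G H) : Iso H G := by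
  obtain ⟨fv, fe, h⟩ := h
  refine ⟨fv.symm, fe.symm, fun e => ?_⟩
  have := h (fe.symm e)
  rw [Equiv.apply_symm_apply] at this
  rw [this, sym2_map_map, sym2_map_id' _ (fun x => fv.symm_apply_apply x)]

theorem Iso.trans {G H K : MG} (h1 : Iso G H) (h2 : Iso H K) : Iso G K := by
  obtain ⟨fv, fe, h1⟩ := h1
  obtain ⟨gv, ge, h2⟩ := h2
  refine ⟨fv.trans gv, fe.trans ge, fun e => ?_⟩
  simp only [Equiv.trans_apply, h2, h1, sym2_map_map]; rfl

theorem IsSubgraphOf.trans {A B C : MG} (h1 : IsSubgraphOf A B) (h2 : IsSubgraphOf B C) :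
    IsSubgraphOf A C := by
  obtain ⟨fv, fe, h1⟩ := h1
  obtain ⟨gv, ge, h2⟩ := h2
  refine ⟨fv.trans gv, fe.trans ge, fun e => ?_⟩
  simp only [Function.Embedding.trans_apply, h2, h1, sym2_map_map]

end MG
end Basics
namespace MG

/-- Reachability by split steps, up to isomorphism at the end. -/
def Reach (A B : MG) : Prop :=
  ∃ C, Relation.ReflTransGen SplitStep A C ∧ Iso C B

theorem Reach.refl (A : MG) : Reach A A := ⟨A, Relation.ReflTransGen.refl, Iso.refl A⟩

theorem Reach.of_iso {A B : MG} (h : Iso A B) : Reach A B :=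
  ⟨A, Relation.ReflTransGen.refl, h⟩

/-- transport a split step along an isomorphism of the source. -/
theorem SplitStep.of_iso {A B C : MG} (h : Iso A B) (hs : SplitStep B C) : SplitStep A C := by
  obtain ⟨fv, fe, hiso⟩ := h
  obtain ⟨e₁, e₂, u, v, w, huw, hne, h1, h2, hC⟩ := hs
  have hends : ∀ e : A.E, A.ends e = Sym2.map fv.symm (B.ends (fe e)) := by
    intro e
    rw [hiso e, sym2_map_map, sym2_map_id' _ (fun x => fv.symm_apply_apply x)]
  have huw' : fv.symm u ≠ fv.symm w := fun hh => huw (fv.symm.injective hh)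
  refine ⟨fe.symm e₁, fe.symm e₂, fv.symm u, fv.symm v, fv.symm w, huw',
    fun hh => hne (fe.symm.injective hh), ?_, ?_, ?_⟩
  · rw [hends, Equiv.apply_symm_apply, h1]; rfl
  · rw [hends, Equiv.apply_symm_apply, h2]; rfl
  · refine hC.trans ?_
    -- Iso (B.splitOff e₁ e₂ u w huw) (A.splitOff (fe.symm e₁) (fe.symm e₂) _ _ huw')
    refine ⟨fv.symm, Equiv.sumCongr (⟨fun x => ⟨fe.symm x.1, ?_, ?_⟩,
        fun x => ⟨fe x.1, ?_, ?_⟩, ?_, ?_⟩) (Equiv.refl Unit), ?_⟩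
    · exact fun hh => x.2.1 (by simpa using congrArg fe hh)
    · exact fun hh => x.2.2 (by simpa using congrArg fe hh)
    · exact fun hh => x.2.1 (by simpa using congrArg fe.symm hh)
    · exact fun hh => x.2.2 (by simpa using congrArg fe.symm hh)
    · intro x; ext; simp
    · intro x; ext; simp
    · rintro (x | x)
      · simpa using hends (fe.symm x.1)
      · simp [splitOff]

theorem rtg_iso_left {A B C : MG} (h : Iso A B) (hc : Relation.ReflTransGen SplitStep B C) :
    Reach A C := by
  rcases Relation.ReflTransGen.cases_head hc with rfl | ⟨D, h1, h2⟩
  · exact Reach.of_iso h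
  · exact ⟨C, Relation.ReflTransGen.head (SplitStep.of_iso h h1) h2, Iso.refl C⟩

theorem Reach.trans {A B C : MG} (h1 : Reach A B) (h2 : Reach B C) : Reach A C := by
  obtain ⟨D, hD, hiso⟩ := h1
  obtain ⟨D', hD', hiso'⟩ := h2
  obtain ⟨D'', hD'', hiso''⟩ := rtg_iso_left hiso hD'
  exact ⟨D'', hD.trans hD'', hiso''.trans hiso'⟩

theorem Reach.trans_iso {A B C : MG} (h1 : Reach A B) (h2 : Iso B C) : Reach A C :=
  h1.trans (Reach.of_iso h2)

end MG
namespace MG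

/-- Delete a set of edges. -/
@[reducible] def EdgeDel (G : MG) (D : Set G.E) : MG where
  V := G.V
  E := {e : G.E // e ∉ D}
  ends := fun e => G.ends e.1
  noLoop := fun e => G.noLoop e.1

theorem edgeDel_sub (G : MG) (D : Set G.E) : IsSubgraphOf (EdgeDel G D) G :=
  ⟨Function.Embedding.refl _, ⟨fun e => e.1, fun a b h => Subtype.ext h⟩,
    fun e => (sym2_map_refl _).symm⟩

theorem edgeDel_iso {A B : MG} (fv : A.V ≃ B.V) (fe : A.E ≃ B.E)
    (h : ∀ e, B.ends (fe e) = Sym2.map fv (A.ends e)) (D : Set B.E) :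
    Iso (EdgeDel A (fe ⁻¹' D)) (EdgeDel B D) := by
  refine ⟨fv, ⟨fun e => ⟨fe e.1, e.2⟩, fun e => ⟨fe.symm e.1, by simpa using e.2⟩,
    fun x => Subtype.ext (by simp), fun x => Subtype.ext (by simp)⟩, fun e => h e.1⟩

theorem del_step_core (A : MG) (e₁ e₂ : A.E) (u v w : A.V) (huw : u ≠ w)
    (hne : e₁ ≠ e₂) (h1 : A.ends e₁ = s(u, v)) (h2 : A.ends e₂ = s(v, w))
    (D' : Set (A.splitOff e₁ e₂ u w huw).E) :
    ∃ D₀ : Set A.E, Reach (EdgeDel A D₀) (EdgeDel (A.splitOff e₁ e₂ u w huw) D') := by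
  by_cases hnew : (Sum.inr () : (A.splitOff e₁ e₂ u w huw).E) ∈ D'
  · -- the new edge is deleted: delete e₁, e₂ and all deleted survivors
    refine ⟨{e | (∃ h12 : e ≠ e₁ ∧ e ≠ e₂, Sum.inl ⟨e, h12⟩ ∈ D') ∨ e = e₁ ∨ e = e₂},
      Reach.of_iso ?_⟩
    refine ⟨Equiv.refl _, ?_, ?_⟩
    · refine ⟨fun x => ⟨Sum.inl ⟨x.1, ⟨fun hh => x.2 (Or.inr (Or.inl hh)),
        fun hh => x.2 (Or.inr (Or.inr hh))⟩⟩, fun hh => x.2 (Or.inl ⟨_, hh⟩)⟩,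
        fun y => match y with
          | ⟨Sum.inl x, hx⟩ => ⟨x.1, fun hh => by
              rcases hh with ⟨h12, hmem⟩ | hh | hh
              · exact hx (by convert hmem)
              · exact x.2.1 hh
              · exact x.2.2 hh⟩
          | ⟨Sum.inr x, hx⟩ => (hx (by cases x; exact hnew)).elim,
        ?_, ?_⟩
      · intro x; exact Subtype.ext rfl
      · rintro ⟨(x | x), hx⟩
        · exact Subtype.ext rfl
        · exact (hx (by cases x; exact hnew)).elim
    · rintro ⟨e, he⟩
      simp [EdgeDel, splitOff, sym2_map_id' _ (fun x => rfl)]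
  · -- the new edge survives: perform the split on the deleted graph
    set D₀ : Set A.E := {e | ∃ h12 : e ≠ e₁ ∧ e ≠ e₂, Sum.inl ⟨e, h12⟩ ∈ D'} with hD₀
    have he₁ : e₁ ∉ D₀ := by rintro ⟨⟨hh, _⟩, _⟩; exact hh rfl
    have he₂ : e₂ ∉ D₀ := by rintro ⟨⟨_, hh⟩, _⟩; exact hh rfl
    have hneX : (⟨e₁, he₁⟩ : (EdgeDel A D₀).E) ≠ ⟨e₂, he₂⟩ :=
      fun hh => hne (congrArg Subtype.val hh)
    refine ⟨D₀, (EdgeDel A D₀).splitOff ⟨e₁, he₁⟩ ⟨e₂, he₂⟩ u w huw,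
      Relation.ReflTransGen.single
        ⟨⟨e₁, he₁⟩, ⟨e₂, he₂⟩, u, v, w, huw, hneX, h1, h2, Iso.refl _⟩, ?_⟩
    refine ⟨Equiv.refl _, ?_, ?_⟩
    · refine ⟨fun x => match x with
        | Sum.inl y => ⟨Sum.inl ⟨y.1.1, ⟨fun hh => y.2.1 (Subtype.ext hh),
            fun hh => y.2.2 (Subtype.ext hh)⟩⟩, fun hh => y.1.2 ⟨_, hh⟩⟩
        | Sum.inr _ => ⟨Sum.inr (), hnew⟩,
        fun y => match y with
        | ⟨Sum.inl x, hx⟩ => Sum.inl ⟨⟨x.1, fun hh => by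
              obtain ⟨h12, hmem⟩ := hh
              exact hx (by convert hmem)⟩,
            fun hh => x.2.1 (congrArg Subtype.val hh),
            fun hh => x.2.2 (congrArg Subtype.val hh)⟩
        | ⟨Sum.inr x, hx⟩ => Sum.inr (), ?_, ?_⟩
      · rintro (x | x)
        · rfl
        · cases x; rfl
      · rintro ⟨(y | y), hy⟩
        · exact Subtype.ext rfl
        · cases y; exact Subtype.ext rfl
    · rintro (y | y) <;>
        simp [EdgeDel, splitOff, sym2_map_id' _ (fun x => rfl)]

theorem del_step {A B : MG} (h : SplitStep A B) (D : Set B.E) :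
    ∃ D₀ : Set A.E, Reach (EdgeDel A D₀) (EdgeDel B D) := by
  obtain ⟨e₁, e₂, u, v, w, huw, hne, h1, h2, fv, fe, hiso⟩ := h
  obtain ⟨D₀, hR⟩ := del_step_core A e₁ e₂ u v w huw hne h1 h2 (fe '' D)
  refine ⟨D₀, hR.trans_iso (Iso.symm ?_)⟩
  have := edgeDel_iso fv fe hiso (fe '' D)
  rwa [Set.preimage_image_eq _ fe.injective] at this

theorem del_chain {A B : MG} (h : Relation.ReflTransGen SplitStep A B) :
    ∀ D : Set B.E, ∃ D₀ : Set A.E, Reach (EdgeDel A D₀) (EdgeDel B D) := by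
  induction h using Relation.ReflTransGen.head_induction_on with
  | refl => exact fun D => ⟨D, Reach.refl _⟩
  | head hstep _ ih =>
    intro D
    obtain ⟨D₁, hR₁⟩ := ih D
    obtain ⟨D₀, hR₀⟩ := del_step hstep D₁
    exact ⟨D₀, hR₀.trans hR₁⟩

end MG
namespace MG

theorem ends_ne {G : MG} {e : G.E} {x y : G.V} (h : G.ends e = s(x, y)) : x ≠ y := by
  have := G.noLoop e
  rw [h, Sym2.mk_isDiag_iff] at this
  exact this

theorem orient_cases {G : MG} {e : G.E} {x y : G.V} (h : G.ends e = s(x, y)) :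
    (G.o1 e = x ∧ G.o2 e = y) ∨ (G.o1 e = y ∧ G.o2 e = x) := by
  have := (G.ends_o e).symm.trans h
  rwa [Sym2.eq_iff] at this

/-- The blow-up of a multigraph: every vertex becomes a clique of `m` copies,
every edge becomes `m²` copies. -/
@[reducible] noncomputable def Bl (G : MG) (m : ℕ) : MG where
  V := G.V × Fin m
  E := (G.E × Fin m × Fin m) ⊕ (G.V × {p : Fin m × Fin m // p.1 < p.2})
  ends := fun x => match x with
    | Sum.inl (e, a, b) => s((G.o1 e, a), (G.o2 e, b))
    | Sum.inr (v, p) => s((v, p.1.1), (v, p.1.2))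
  noLoop := by
    rintro (⟨e, a, b⟩ | ⟨v, p⟩) <;> rw [Sym2.mk_isDiag_iff]
    · exact fun hh => G.o_ne e (congrArg Prod.fst hh)
    · exact fun hh => p.2.ne (congrArg Prod.snd hh)

theorem bl_ends_inr (G : MG) (m : ℕ) (v : G.V) (p : {p : Fin m × Fin m // p.1 < p.2}) :
    (Bl G m).ends (Sum.inr (v, p)) = s((v, p.1.1), (v, p.1.2)) := rfl

open scoped Classical in
/-- The copy of edge `e` (with endpoints `x`, `y`) with labels `a` at `x`, `b` at `y`. -/
noncomputable def cop (G : MG) (m : ℕ) (e : G.E) (x : G.V) (a b : Fin m) : (Bl G m).E :=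
  if G.o1 e = x then Sum.inl (e, a, b) else Sum.inl (e, b, a)

theorem cop_ends {G : MG} {m : ℕ} {e : G.E} {x y : G.V} (h : G.ends e = s(x, y))
    (a b : Fin m) : (Bl G m).ends (cop G m e x a b) = s((x, a), (y, b)) := by
  unfold cop
  rcases orient_cases h with ⟨h1, h2⟩ | ⟨h1, h2⟩
  · rw [if_pos h1]
    show s((G.o1 e, a), (G.o2 e, b)) = _
    rw [h1, h2]
  · rw [if_neg (fun hh => ends_ne h (h1 ▸ hh).symm)]
    show s((G.o1 e, b), (G.o2 e, a)) = _
    rw [h1, h2, Sym2.eq_swap]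

theorem cop_val {G : MG} {m : ℕ} (e : G.E) (x : G.V) (a b : Fin m) :
    cop G m e x a b = Sum.inl (e, a, b) ∨ cop G m e x a b = Sum.inl (e, b, a) := by
  unfold cop; split
  · exact Or.inl rfl
  · exact Or.inr rfl

theorem cop_inj {G : MG} {m : ℕ} {e : G.E} {x : G.V} {a b a' b' : Fin m}
    (hh : cop G m e x a b = cop G m e x a' b') : a = a' ∧ b = b' := by
  unfold cop at hh
  split at hh
  · injection hh with hh; simp only [Prod.mk.injEq] at hh; exact hh.2
  · injection hh with hh; simp only [Prod.mk.injEq] at hh; exact ⟨hh.2.2, hh.2.1⟩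

theorem cop_surj {G : MG} {m : ℕ} (e : G.E) (x : G.V) (p q : Fin m) :
    ∃ a b, (Sum.inl (e, p, q) : (Bl G m).E) = cop G m e x a b := by
  unfold cop; split
  · exact ⟨p, q, rfl⟩
  · exact ⟨q, p, rfl⟩

end MG
namespace MG

theorem map_prodCongr {α β} (fv : α → β) {m : ℕ} (x y : α) (a b : Fin m) :
    Sym2.map (fun p : α × Fin m => (fv p.1, p.2)) s((x, a), (y, b)) =
      s((fv x, a), (fv y, b)) := rfl

theorem bl_iso {A B : MG} (h : Iso A B) (m : ℕ) : Iso (Bl A m) (Bl B m) := by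
  obtain ⟨fv, fe, hiso⟩ := h
  have hso : ∀ e : A.E, B.ends (fe e) = s(fv (A.o1 e), fv (A.o2 e)) := by
    intro e; rw [hiso e, A.ends_o e]; rfl
  refine ⟨Equiv.prodCongr fv (Equiv.refl (Fin m)), Equiv.ofBijective (fun x =>
    match x with
    | Sum.inl (e, a, b) => cop B m (fe e) (fv (A.o1 e)) a b
    | Sum.inr (v, p) => Sum.inr (fv v, p)) ⟨?_, ?_⟩, ?_⟩
  · -- injective
    rintro (⟨e, a, b⟩ | ⟨v, p⟩) (⟨e', a', b'⟩ | ⟨v', p'⟩) hh <;> dsimp only at hh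
    · have he : e = e' := by
        rcases cop_val (G := B) (m := m) (fe e) (fv (A.o1 e)) a b with h1 | h1 <;>
        rcases cop_val (G := B) (m := m) (fe e') (fv (A.o1 e')) a' b' with h2 | h2 <;>
        · rw [h1, h2] at hh
          injection hh with hh
          exact fe.injective (congrArg Prod.fst hh)
      subst he
      obtain ⟨ha, hb⟩ := cop_inj hh
      rw [ha, hb]
    · rcases cop_val (G := B) (m := m) (fe e) (fv (A.o1 e)) a b with h1 | h1 <;>
        rw [h1] at hh <;> exact absurd hh (by simp)
    · rcases cop_val (G := B) (m := m) (fe e') (fv (A.o1 e')) a' b' with h1 | h1 <;>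
        rw [h1] at hh <;> exact absurd hh (by simp)
    · injection hh with hh
      rw [show v = v' from fv.injective (congrArg Prod.fst hh),
        show p = p' from congrArg Prod.snd hh]
  · -- surjective
    rintro (⟨f, p, q⟩ | ⟨w, p⟩)
    · obtain ⟨a, b, hab⟩ := cop_surj (G := B) (m := m) f (fv (A.o1 (fe.symm f))) p q
      refine ⟨Sum.inl (fe.symm f, a, b), ?_⟩
      show cop B m (fe (fe.symm f)) _ a b = _
      rw [Equiv.apply_symm_apply]
      exact hab.symm
    · exact ⟨Sum.inr (fv.symm w, p), by dsimp only; rw [Equiv.apply_symm_apply]⟩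
  · -- ends
    rintro (⟨e, a, b⟩ | ⟨v, p⟩)
    · show (Bl B m).ends (cop B m (fe e) (fv (A.o1 e)) a b) = _
      rw [cop_ends (hso e)]
      exact (map_prodCongr fv (A.o1 e) (A.o2 e) a b).symm
    · rfl

end MG
namespace MG

/-- The result of splitting off all the pairs `(P i, Q i)` into new `U i — W i` edges. -/
@[reducible] def parTarget (G : MG) {N : ℕ} (P Q : Fin N → G.E) (U W : Fin N → G.V)
    (hUW : ∀ i, U i ≠ W i) : MG where
  V := G.V
  E := {e : G.E // ∀ i, e ≠ P i ∧ e ≠ Q i} ⊕ Fin N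
  ends := fun x => match x with
    | Sum.inl e => G.ends e.1
    | Sum.inr i => s(U i, W i)
  noLoop := by
    rintro (e | i)
    · exact G.noLoop e.1
    · rw [Sym2.mk_isDiag_iff]; exact hUW i

theorem parSplit {N : ℕ} (G : MG) (P Q : Fin N → G.E) (U V W : Fin N → G.V)
    (hPinj : Function.Injective P) (hQinj : Function.Injective Q)
    (hPQ : ∀ i j, P i ≠ Q j)
    (hP : ∀ i, G.ends (P i) = s(U i, V i)) (hQ : ∀ i, G.ends (Q i) = s(V i, W i))
    (hUW : ∀ i, U i ≠ W i) :
    Reach G (parTarget G P Q U W hUW) := by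
  induction N generalizing G with
  | zero =>
    refine Reach.of_iso ⟨Equiv.refl _, ⟨fun e => Sum.inl ⟨e, fun i => i.elim0⟩,
      fun x => match x with
        | Sum.inl e => e.1
        | Sum.inr i => i.elim0, fun e => rfl, fun x => match x with
        | Sum.inl e => rfl
        | Sum.inr i => i.elim0⟩, ?_⟩
    rintro e
    simp [parTarget, sym2_map_id' _ (fun x => rfl)]
  | succ N ih =>
    set L := Fin.last N
    set G₁ := G.splitOff (P L) (Q L) (U L) (W L) (hUW L) with hG₁
    have hstep : SplitStep G G₁ :=
      ⟨P L, Q L, U L, V L, W L, hUW L, hPQ L L, hP L, hQ L, Iso.refl _⟩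
    have hPne : ∀ i : Fin N, P i.castSucc ≠ P L ∧ P i.castSucc ≠ Q L := fun i =>
      ⟨fun hh => (Fin.castSucc_lt_last i).ne (hPinj hh), hPQ _ _⟩
    have hQne : ∀ i : Fin N, Q i.castSucc ≠ P L ∧ Q i.castSucc ≠ Q L := fun i =>
      ⟨fun hh => hPQ L i.castSucc hh.symm, fun hh => (Fin.castSucc_lt_last i).ne (hQinj hh)⟩
    set P' : Fin N → G₁.E := fun i => Sum.inl ⟨P i.castSucc, hPne i⟩ with hP'
    set Q' : Fin N → G₁.E := fun i => Sum.inl ⟨Q i.castSucc, hQne i⟩ with hQ'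
    have hre : Reach G₁ (parTarget G₁ P' Q' (fun i => U i.castSucc) (fun i => W i.castSucc)
        (fun i => hUW i.castSucc)) := by
      refine ih G₁ P' Q' (fun i => U i.castSucc) (fun i => V i.castSucc)
        (fun i => W i.castSucc) ?_ ?_ ?_ ?_ ?_ (fun i => hUW i.castSucc)
      · intro i j hh
        injection hh with hh
        exact Fin.castSucc_injective N (hPinj (congrArg Subtype.val hh))
      · intro i j hh
        injection hh with hh
        exact Fin.castSucc_injective N (hQinj (congrArg Subtype.val hh))
      · intro i j hh
        injection hh with hh
        exact hPQ _ _ (congrArg Subtype.val hh)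
      · exact fun i => hP i.castSucc
      · exact fun i => hQ i.castSucc
    refine Reach.trans ⟨G₁, Relation.ReflTransGen.single hstep, Iso.refl _⟩
      (hre.trans_iso ?_)
    -- Iso (parTarget G₁ ...) (parTarget G P Q U W hUW)
    have hext : ∀ (e : {e : G.E // e ≠ P L ∧ e ≠ Q L}),
        (∀ i, (Sum.inl e : G₁.E) ≠ P' i ∧ (Sum.inl e : G₁.E) ≠ Q' i) →
        ∀ i : Fin (N + 1), e.1 ≠ P i ∧ e.1 ≠ Q i := by
      intro e havoid i
      induction i using Fin.lastCases with
      | last => exact e.2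
      | cast j =>
        refine ⟨fun hh => (havoid j).1 ?_, fun hh => (havoid j).2 ?_⟩
        · rw [hP']; exact congrArg Sum.inl (Subtype.ext hh)
        · rw [hQ']; exact congrArg Sum.inl (Subtype.ext hh)
    refine ⟨Equiv.refl _, Equiv.ofBijective (fun x => match x with
      | Sum.inl ⟨Sum.inl e, havoid⟩ => Sum.inl ⟨e.1, hext e havoid⟩
      | Sum.inl ⟨Sum.inr _, _⟩ => Sum.inr L
      | Sum.inr i => Sum.inr i.castSucc) ⟨?_, ?_⟩, ?_⟩
    · rintro (⟨(e | u), he⟩ | i) (⟨(e' | u'), he'⟩ | i') hh <;> dsimp only at hh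
      · injection hh with hh
        simp only [Subtype.mk.injEq] at hh
        exact congrArg Sum.inl (Subtype.ext (congrArg Sum.inl (Subtype.ext hh)))
      · exact absurd hh (by simp)
      · exact absurd hh (by simp)
      · exact absurd hh (by simp)
      · cases u; cases u'; exact congrArg Sum.inl (Subtype.ext rfl)
      · injection hh with hh
        exact absurd hh.symm (Fin.castSucc_lt_last i').ne
      · exact absurd hh (by simp)
      · injection hh with hh
        exact absurd hh (Fin.castSucc_lt_last i).ne
      · injection hh with hh
        exact congrArg Sum.inr (Fin.castSucc_injective N hh)
    · rintro (⟨e, he⟩ | i)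
      · refine ⟨Sum.inl ⟨Sum.inl ⟨e, he L⟩, fun j => ⟨?_, ?_⟩⟩, ?_⟩
        · rw [hP']
          intro hh
          injection hh with hh
          exact (he j.castSucc).1 (congrArg Subtype.val hh)
        · rw [hQ']
          intro hh
          injection hh with hh
          exact (he j.castSucc).2 (congrArg Subtype.val hh)
        · exact congrArg Sum.inl (Subtype.ext rfl)
      · induction i using Fin.lastCases with
        | last => exact ⟨Sum.inl ⟨Sum.inr (), fun j => ⟨by rw [hP']; simp, by rw [hQ']; simp⟩⟩, rfl⟩
        | cast j => exact ⟨Sum.inr j, rfl⟩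
    · rintro x
      refine Eq.trans ?_ (sym2_map_refl _).symm
      obtain (⟨(e | u), he⟩ | i) := x <;> rfl

end MG
namespace MG

theorem bl_splitOff (G : MG) (m : ℕ) [NeZero m] (e₁ e₂ : G.E) (u v w : G.V)
    (huw : u ≠ w) (hne : e₁ ≠ e₂) (h1 : G.ends e₁ = s(u, v)) (h2 : G.ends e₂ = s(v, w)) :
    Reach (Bl G m) (Bl (G.splitOff e₁ e₂ u w huw) m) := by
  set SO := G.splitOff e₁ e₂ u w huw with hSO
  set ee : Fin (m * m) ≃ Fin m × Fin m := finProdFinEquiv.symm with hee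
  set a : Fin (m * m) → Fin m := fun k => (ee k).1 with ha
  set d : Fin (m * m) → Fin m := fun k => (ee k).2 with hd
  set P : Fin (m * m) → (Bl G m).E := fun k => cop G m e₁ u (a k) (a k + d k) with hP
  set Q : Fin (m * m) → (Bl G m).E := fun k => cop G m e₂ v (a k + d k) (d k) with hQ
  set U : Fin (m * m) → (Bl G m).V := fun k => (u, a k) with hU
  set VV : Fin (m * m) → (Bl G m).V := fun k => (v, a k + d k) with hVV
  set W : Fin (m * m) → (Bl G m).V := fun k => (w, d k) with hW
  have hUW : ∀ k, U k ≠ W k := fun k hh => huw (congrArg Prod.fst hh)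
  have hPinj : Function.Injective P := by
    intro k k' hh
    obtain ⟨hx, hy⟩ := cop_inj hh
    apply ee.injective
    exact Prod.ext hx (by rwa [hx, add_right_inj] at hy)
  have hQinj : Function.Injective Q := by
    intro k k' hh
    obtain ⟨hx, hy⟩ := cop_inj hh
    apply ee.injective
    exact Prod.ext (by rwa [hy, add_left_inj] at hx) hy
  have hPQ : ∀ k j, P k ≠ Q j := by
    intro k j hh
    rcases cop_val (G := G) (m := m) e₁ u (a k) (a k + d k) with hc1 | hc1 <;>
      rcases cop_val (G := G) (m := m) e₂ v (a j + d j) (d j) with hc2 | hc2 <;>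
    · rw [hP, hQ] at hh
      dsimp only at hh
      rw [hc1, hc2] at hh
      injection hh with hh
      exact hne (congrArg Prod.fst hh)
  have hre := parSplit (Bl G m) P Q U VV W hPinj hQinj hPQ
    (fun k => cop_ends h1 _ _) (fun k => cop_ends h2 _ _) hUW
  refine hre.trans_iso ?_
  -- Iso (parTarget (Bl G m) P Q U W hUW) (Bl SO m)
  have hhit1 : ∀ p q : Fin m, ∃ k, (Sum.inl (e₁, p, q) : (Bl G m).E) = P k := by
    intro p q
    obtain ⟨A, B, hAB⟩ := cop_surj (G := G) (m := m) e₁ u p q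
    refine ⟨ee.symm (A, B - A), ?_⟩
    rw [hP]
    simp only [ha, hd, Equiv.apply_symm_apply]
    rw [hAB]
    congr 1
    exact (add_sub_cancel A B).symm
  have hhit2 : ∀ p q : Fin m, ∃ k, (Sum.inl (e₂, p, q) : (Bl G m).E) = Q k := by
    intro p q
    obtain ⟨A, B, hAB⟩ := cop_surj (G := G) (m := m) e₂ v p q
    refine ⟨ee.symm (A - B, B), ?_⟩
    rw [hQ]
    simp only [ha, hd, Equiv.apply_symm_apply]
    rw [hAB]
    congr 1
    exact (sub_add_cancel A B).symm
  have hne1 : ∀ (e : G.E) (p q : Fin m),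
      (∀ k, (Sum.inl (e, p, q) : (Bl G m).E) ≠ P k) → e ≠ e₁ := by
    intro e p q hav heq
    obtain ⟨k, hk⟩ := hhit1 p q
    exact hav k (heq ▸ hk)
  have hne2 : ∀ (e : G.E) (p q : Fin m),
      (∀ k, (Sum.inl (e, p, q) : (Bl G m).E) ≠ Q k) → e ≠ e₂ := by
    intro e p q hav heq
    obtain ⟨k, hk⟩ := hhit2 p q
    exact hav k (heq ▸ hk)
  have hSOnew : SO.ends (Sum.inr ()) = s(u, w) := rfl
  refine ⟨Equiv.refl _, Equiv.ofBijective (fun x => match x with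
    | Sum.inl ⟨Sum.inl (e, p, q), havoid⟩ =>
        Sum.inl (Sum.inl ⟨e, hne1 e p q (fun k => (havoid k).1),
          hne2 e p q (fun k => (havoid k).2)⟩, p, q)
    | Sum.inl ⟨Sum.inr cl, _⟩ => Sum.inr cl
    | Sum.inr k => cop SO m (Sum.inr ()) u (a k) (d k)) ⟨?_, ?_⟩, ?_⟩
  · -- injective
    rintro (⟨(⟨e, p, q⟩ | cl), hav⟩ | k) (⟨(⟨e', p', q'⟩ | cl'), hav'⟩ | k') hh <;>
      dsimp only at hh
    · injection hh with hh
      simp only [Prod.mk.injEq] at hh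
      obtain ⟨hh1, rfl, rfl⟩ := hh
      injection hh1 with hh1
      have he : e = e' := congrArg Subtype.val hh1
      subst he
      exact congrArg Sum.inl (Subtype.ext rfl)
    · exact absurd hh (by simp)
    · rcases cop_val (G := SO) (m := m) (Sum.inr ()) u (a k') (d k') with hc | hc <;>
      · rw [hc] at hh
        injection hh with hh
        exact absurd (congrArg Prod.fst hh) (by simp)
    · exact absurd hh (by simp)
    · injection hh with hh
      exact congrArg Sum.inl (Subtype.ext (congrArg Sum.inr hh))
    · rcases cop_val (G := SO) (m := m) (Sum.inr ()) u (a k') (d k') with hc | hc <;>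
      · rw [hc] at hh
        exact absurd hh (by simp)
    · rcases cop_val (G := SO) (m := m) (Sum.inr ()) u (a k) (d k) with hc | hc <;>
      · rw [hc] at hh
        injection hh with hh
        exact absurd (congrArg Prod.fst hh).symm (by simp)
    · rcases cop_val (G := SO) (m := m) (Sum.inr ()) u (a k) (d k) with hc | hc <;>
      · rw [hc] at hh
        exact absurd hh.symm (by simp)
    · obtain ⟨hx, hy⟩ := cop_inj hh
      exact congrArg Sum.inr (ee.injective (Prod.ext hx hy))
  · -- surjective
    rintro (⟨(⟨e, h12⟩ | u'), p, q⟩ | cl)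
    · refine ⟨Sum.inl ⟨Sum.inl (e, p, q), fun k => ⟨?_, ?_⟩⟩, rfl⟩
      · rcases cop_val (G := G) (m := m) e₁ u (a k) (a k + d k) with hc | hc <;>
        · rw [hP]; dsimp only; rw [hc]
          intro hh
          injection hh with hh
          exact h12.1 (congrArg Prod.fst hh)
      · rcases cop_val (G := G) (m := m) e₂ v (a k + d k) (d k) with hc | hc <;>
        · rw [hQ]; dsimp only; rw [hc]
          intro hh
          injection hh with hh
          exact h12.2 (congrArg Prod.fst hh)
    · cases u'
      obtain ⟨A, B, hAB⟩ := cop_surj (G := SO) (m := m) (Sum.inr ()) u p q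
      refine ⟨Sum.inr (ee.symm (A, B)), ?_⟩
      simp only [ha, hd, Equiv.apply_symm_apply]
      exact hAB.symm
    · refine ⟨Sum.inl ⟨Sum.inr cl, fun k => ⟨?_, ?_⟩⟩, rfl⟩
      · rcases cop_val (G := G) (m := m) e₁ u (a k) (a k + d k) with hc | hc <;>
        · rw [hP]; dsimp only; rw [hc]; simp
      · rcases cop_val (G := G) (m := m) e₂ v (a k + d k) (d k) with hc | hc <;>
        · rw [hQ]; dsimp only; rw [hc]; simp
  · -- ends
    rintro x
    refine Eq.trans ?_ (sym2_map_refl _).symm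
    obtain (⟨(⟨e, p, q⟩ | cl), hav⟩ | k) := x
    · rfl
    · rfl
    · exact cop_ends hSOnew (a k) (d k)

theorem bl_step {A B : MG} (m : ℕ) [NeZero m] (h : SplitStep A B) :
    Reach (Bl A m) (Bl B m) := by
  obtain ⟨e₁, e₂, u, v, w, huw, hne, h1, h2, hiso⟩ := h
  exact (bl_splitOff A m e₁ e₂ u v w huw hne h1 h2).trans_iso (bl_iso hiso.symm m)

theorem bl_chain {A B : MG} (m : ℕ) [NeZero m] (h : Relation.ReflTransGen SplitStep A B) :
    Reach (Bl A m) (Bl B m) := by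
  induction h with
  | refl => exact Reach.refl _
  | tail _ h2 ih => exact ih.trans (bl_step m h2)

end MG
namespace MG

theorem bl_sub (H : MG) (G₀ : MG) (m : ℕ)
    (hsub : IsSubgraphOf G₀ (SimpleGraph.toMG H.lineGraph)) :
    IsSubgraphOf (Bl G₀ m) (SimpleGraph.toMG (H.mul m).lineGraph) := by
  obtain ⟨fv, fe, hends⟩ := hsub
  have key : ∀ e : G₀.E, (fe e).1 = s(fv (G₀.o1 e), fv (G₀.o2 e)) := by
    intro e
    have := hends e
    rw [G₀.ends_o e] at this
    exact this
  have adj1 : ∀ e : G₀.E, H.lineGraph.Adj (fv (G₀.o1 e)) (fv (G₀.o2 e)) := by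
    intro e
    have := (fe e).2
    rwa [key e, SimpleGraph.mem_edgeSet] at this
  have hfne : ∀ e : G₀.E, fv (G₀.o1 e) ≠ fv (G₀.o2 e) :=
    fun e hh => G₀.o_ne e (fv.injective hh)
  have memH : ∀ f : H.E, H.o1 f ∈ H.ends f := by
    intro f
    rw [H.ends_o f]
    exact Sym2.mem_mk_left _ _
  -- the edge map
  have adjL : ∀ (e : G₀.E) (a b : Fin m),
      (H.mul m).lineGraph.Adj (fv (G₀.o1 e), a) (fv (G₀.o2 e), b) := by
    intro e a b
    obtain ⟨hne, z, hz1, hz2⟩ := adj1 e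
    exact ⟨fun hh => hne (pfst hh), z, hz1, hz2⟩
  have adjC : ∀ (x : G₀.V) (p : {p : Fin m × Fin m // p.1 < p.2}),
      (H.mul m).lineGraph.Adj (fv x, p.1.1) (fv x, p.1.2) := by
    intro x p
    exact ⟨fun hh => p.2.ne (psnd hh), H.o1 (fv x), memH _, memH _⟩
  refine ⟨⟨fun y => (fv y.1, y.2), ?_⟩, ⟨fun x => match x with
    | Sum.inl (e, a, b) => ⟨s((fv (G₀.o1 e), a), (fv (G₀.o2 e), b)),
        (SimpleGraph.mem_edgeSet _).mpr (adjL e a b)⟩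
    | Sum.inr (x, p) => ⟨s((fv x, p.1.1), (fv x, p.1.2)),
        (SimpleGraph.mem_edgeSet _).mpr (adjC x p)⟩, ?_⟩, ?_⟩
  · rintro ⟨x, i⟩ ⟨y, j⟩ hh
    dsimp only at hh
    have h1 : fv x = fv y := pfst hh
    have h2 : i = j := psnd hh
    exact Prod.ext (fv.injective h1) h2
  · -- injectivity of the edge map
    rintro (⟨e, a, b⟩ | ⟨x, p⟩) (⟨e', a', b'⟩ | ⟨x', p'⟩) hh <;>
      dsimp only at hh <;> rw [Subtype.mk.injEq, Sym2.eq_iff] at hh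
    · rcases hh with ⟨hh1, hh2⟩ | ⟨hh1, hh2⟩
      · have hf1 : fv (G₀.o1 e) = fv (G₀.o1 e') := pfst hh1
        have hf2 : fv (G₀.o2 e) = fv (G₀.o2 e') := pfst hh2
        have he : e = e' := by
          apply fe.injective
          apply Subtype.ext
          rw [key e, key e', hf1, hf2]
        subst he
        rw [show a = a' from psnd hh1, show b = b' from psnd hh2]
      · have hf1 : fv (G₀.o1 e) = fv (G₀.o2 e') := pfst hh1
        have hf2 : fv (G₀.o2 e) = fv (G₀.o1 e') := pfst hh2
        have he : e = e' := by
          apply fe.injective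
          apply Subtype.ext
          rw [key e, key e', hf1, hf2, Sym2.eq_swap]
        subst he
        exact absurd (fv.injective hf1) (G₀.o_ne e)
    · rcases hh with ⟨hh1, hh2⟩ | ⟨hh1, hh2⟩
      · have hf1 : fv (G₀.o1 e) = fv x' := pfst hh1
        have hf2 : fv (G₀.o2 e) = fv x' := pfst hh2
        exact absurd (fv.injective (hf1.trans hf2.symm)) (G₀.o_ne e)
      · have hf1 : fv (G₀.o1 e) = fv x' := pfst hh1
        have hf2 : fv (G₀.o2 e) = fv x' := pfst hh2
        exact absurd (fv.injective (hf1.trans hf2.symm)) (G₀.o_ne e)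
    · rcases hh with ⟨hh1, hh2⟩ | ⟨hh1, hh2⟩
      · have hf1 : fv x = fv (G₀.o1 e') := pfst hh1
        have hf2 : fv x = fv (G₀.o2 e') := pfst hh2
        exact absurd (fv.injective (hf1.symm.trans hf2)) (G₀.o_ne e')
      · have hf1 : fv x = fv (G₀.o2 e') := pfst hh1
        have hf2 : fv x = fv (G₀.o1 e') := pfst hh2
        exact absurd (fv.injective (hf2.symm.trans hf1)) (G₀.o_ne e')
    · rcases hh with ⟨hh1, hh2⟩ | ⟨hh1, hh2⟩
      · have hx : x = x' := fv.injective (pfst hh1)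
        subst hx
        have h1' := psnd hh1
        have h2' := psnd hh2
        have hp : p = p' := Subtype.ext (Prod.ext h1' h2')
        rw [hp]
      · have h1' := psnd hh1
        have h2' := psnd hh2
        exact absurd h1' (ne_of_lt (lt_trans (lt_of_lt_of_eq p.2 h2') p'.2))
  · rintro (⟨e, a, b⟩ | ⟨x, p⟩) <;> rfl

end MG
namespace MG

/-- The data at the end of an immersion. -/
def FinalData (X : MG) (t : ℕ) : Prop :=
  ∃ (fv : (completeMG t).V ↪ X.V) (fe : (completeMG t).E ≃ X.E),
    (∀ e, X.ends (fe e) = Sym2.map fv ((completeMG t).ends e)) ∧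
    ∀ v : X.V, v ∉ Set.range fv → ∀ e, v ∉ X.ends e

theorem finalData_iso {X Z : MG} {t : ℕ} (h : Iso X Z) (hfd : FinalData Z t) :
    FinalData X t := by
  obtain ⟨gv, ge, hg⟩ := h
  obtain ⟨fvZ, feZ, hZ, hisolZ⟩ := hfd
  have hg' : ∀ x : X.E, X.ends x = Sym2.map gv.symm (Z.ends (ge x)) := by
    intro x
    rw [hg x, sym2_map_map, sym2_map_id' _ (fun y => gv.symm_apply_apply y)]
  refine ⟨fvZ.trans gv.symm.toEmbedding, feZ.trans ge.symm, fun e => ?_, ?_⟩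
  · show X.ends (ge.symm (feZ e)) = _
    rw [hg' (ge.symm (feZ e))] at *
    rw [Equiv.apply_symm_apply, hZ e, sym2_map_map]
    rfl
  · intro v hv e hve
    have h1 : gv v ∈ Z.ends (ge e) := by
      rw [hg e, Sym2.mem_map]
      exact ⟨v, hve, rfl⟩
    have h2 : gv v ∉ Set.range fvZ := by
      rintro ⟨ε, hε⟩
      exact hv ⟨ε, by simp [hε]⟩
    exact hisolZ (gv v) h2 (ge e) h1

theorem immersion_mk {G X₀ Y : MG} {t : ℕ} (hsub : IsSubgraphOf X₀ G) (hre : Reach X₀ Y)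
    (hfd : FinalData Y t) : Immersion G (completeMG t) := by
  obtain ⟨C, hch, hiso⟩ := hre
  exact ⟨X₀, C, hsub, hch, finalData_iso hiso hfd⟩

theorem finalData_blow (G₁ : MG) (m s t : ℕ) [NeZero m] (ht : t ≤ m * s)
    (fvK : (completeMG s).V ↪ G₁.V) (feK : (completeMG s).E ≃ G₁.E)
    (hendsK : ∀ e, G₁.ends (feK e) = Sym2.map fvK ((completeMG s).ends e)) :
    ∃ D : Set (Bl G₁ m).E, FinalData (EdgeDel (Bl G₁ m) D) t := by
  classical
  have hm0 : 0 < m := Nat.pos_of_ne_zero (NeZero.ne m)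
  -- the terminal copies
  have hdiv : ∀ i : Fin t, (i : ℕ) / m < s := by
    intro i
    rw [Nat.div_lt_iff_lt_mul hm0]
    exact lt_of_lt_of_le i.2 (ht.trans (le_of_eq (Nat.mul_comm m s)))
  set τ : Fin t → Fin s × Fin m :=
    fun i => (⟨(i : ℕ) / m, hdiv i⟩, ⟨(i : ℕ) % m, Nat.mod_lt _ hm0⟩) with hτ
  have hτinj : Function.Injective τ := by
    intro i j hh
    have h1 : (i : ℕ) / m = (j : ℕ) / m := congrArg Fin.val (pfst hh)
    have h2 : (i : ℕ) % m = (j : ℕ) % m := congrArg Fin.val (psnd hh)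
    have d1 := Nat.div_add_mod (i : ℕ) m
    have d2 := Nat.div_add_mod (j : ℕ) m
    rw [h1, h2] at d1
    apply Fin.ext
    omega
  set T : Fin t → (Bl G₁ m).V := fun i => (fvK (τ i).1, (τ i).2) with hT
  have hTinj : Function.Injective T := by
    intro i j hh
    apply hτinj
    have h1 := pfst hh
    have h2 := psnd hh
    exact Prod.ext (fvK.injective h1) h2
  -- the base edges
  have hbe : ∀ (i j : Fin s), i ≠ j → s(i, j) ∈ (⊤ : SimpleGraph (Fin s)).edgeSet :=
    fun i j hij => (SimpleGraph.mem_edgeSet _).mpr ((SimpleGraph.top_adj i j).mpr hij)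
  have hendsK' : ∀ (i j : Fin s) (hij : i ≠ j),
      G₁.ends (feK ⟨s(i, j), hbe i j hij⟩) = s(fvK i, fvK j) := by
    intro i j hij
    rw [hendsK]
    rfl
  -- the orientation of an edge of K_t
  have hor : ∀ ε : (completeMG t).E,
      (orient ε.1).1 ≠ (orient ε.1).2 ∧ ε.1 = s((orient ε.1).1, (orient ε.1).2) := by
    intro ε
    have hsp := orient_spec ε.1
    have := ε.2
    rw [← hsp, SimpleGraph.mem_edgeSet, SimpleGraph.top_adj] at this
    exact ⟨this, hsp.symm⟩
  -- distinguishing labels in the clique case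
  have hlab : ∀ (ε : (completeMG t).E),
      (τ (orient ε.1).1).1 = (τ (orient ε.1).2).1 →
      (τ (orient ε.1).1).2 ≠ (τ (orient ε.1).2).2 := by
    intro ε hbase hh
    exact (hor ε).1 (hτinj (Prod.ext hbase hh))
  -- the map from edges of K_t into the blow-up
  set κ : (completeMG t).E → (Bl G₁ m).E := fun ε =>
    if hbase : (τ (orient ε.1).1).1 = (τ (orient ε.1).2).1 then
      Sum.inr (fvK (τ (orient ε.1).1).1,
        if hlt : (τ (orient ε.1).1).2 < (τ (orient ε.1).2).2 then
          ⟨((τ (orient ε.1).1).2, (τ (orient ε.1).2).2), hlt⟩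
        else ⟨((τ (orient ε.1).2).2, (τ (orient ε.1).1).2),
          lt_of_le_of_ne (not_lt.mp hlt) (Ne.symm (hlab ε hbase))⟩)
    else
      cop G₁ m (feK ⟨s((τ (orient ε.1).1).1, (τ (orient ε.1).2).1), hbe _ _ hbase⟩)
        (fvK (τ (orient ε.1).1).1) (τ (orient ε.1).1).2 (τ (orient ε.1).2).2
    with hκ
  have hκends : ∀ ε, (Bl G₁ m).ends (κ ε) = Sym2.map T ε.1 := by
    intro ε
    have hmap : Sym2.map T ε.1 = s(T (orient ε.1).1, T (orient ε.1).2) := by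
      conv_lhs => rw [(hor ε).2]
      rw [Sym2.map_pair_eq]
    rw [hmap, hκ]
    beta_reduce
    split
    · rename_i hbase
      split
      · rw [bl_ends_inr, hT]
        dsimp only
        rw [← hbase]
      · rw [bl_ends_inr, hT]
        dsimp only
        rw [← hbase, Sym2.eq_swap]
    · rename_i hbase
      rw [cop_ends (hendsK' _ _ hbase)]
  have hκinj : Function.Injective κ := by
    intro ε ε' hh
    have := hκends ε
    rw [hh, hκends ε'] at this
    exact Subtype.ext (Sym2.map.injective hTinj this.symm)
  refine ⟨(Set.range κ)ᶜ, ⟨T, hTinj⟩, (Equiv.ofInjective κ hκinj).trans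
    (Equiv.subtypeEquivRight (fun x => Set.notMem_compl_iff.symm)), fun e => ?_, ?_⟩
  · exact hκends e
  · intro v hv x hvx
    have hx : x.1 ∈ Set.range κ := Set.notMem_compl_iff.mp x.2
    obtain ⟨ε, hε⟩ := hx
    have : v ∈ (Bl G₁ m).ends (κ ε) := by rw [hε]; exact hvx
    rw [hκends ε, Sym2.mem_map] at this
    obtain ⟨z, _, hz⟩ := this
    exact hv ⟨z, hz⟩

end MG
namespace MG

theorem colorable_mul (H : MG) (m n : ℕ) (h : H.lineGraph.Colorable n) :
    (H.mul m).lineGraph.Colorable (n * m) := by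
  obtain ⟨c⟩ := h
  refine ⟨(SimpleGraph.recolorOfEquiv _ finProdFinEquiv) (SimpleGraph.Coloring.mk
    (fun p => (c p.1, p.2)) ?_)⟩
  rintro ⟨e, i⟩ ⟨f, j⟩ ⟨hne, z, hz1, hz2⟩ hh
  by_cases hef : e = f
  · subst hef
    exact hne (congrArg (Prod.mk e) (psnd hh))
  · exact c.valid (G := H.lineGraph) ⟨hef, z, hz1, hz2⟩ (pfst hh)

theorem AKL_of_mul' (H : MG) (hAKL : AKLProp H.lineGraph) (m : ℕ) (hm : 2 ≤ m) :
    AKLProp (H.mul m).lineGraph := by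
  intro t ht
  haveI : NeZero m := ⟨by omega⟩
  have hm0 : 0 < m := by omega
  set s := (t + m - 1) / m with hs
  have hdm := Nat.div_add_mod (t + m - 1) m
  have hmod := Nat.mod_lt (t + m - 1) hm0
  rw [← hs] at hdm
  -- t ≤ m * s
  have hts : t ≤ m * s := by
    rcases Nat.eq_zero_or_pos t with rfl | htpos
    · exact Nat.zero_le _
    set MS := m * s with hMS
    omega
  -- the chromatic bound
  have hslb : (s : ℕ∞) ≤ H.lineGraph.chromaticNumber := by
    rcases Nat.eq_zero_or_pos s with hs0 | hspos
    · simp [hs0]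
    by_contra hcon
    push_neg at hcon
    have hne_top : H.lineGraph.chromaticNumber ≠ ⊤ := ne_top_of_lt hcon
    obtain ⟨n, hn⟩ := WithTop.ne_top_iff_exists.mp hne_top
    have hns : n < s := by
      rw [← hn] at hcon
      exact WithTop.coe_lt_coe.mp hcon
    have hcoln : H.lineGraph.Colorable n := by
      rw [← SimpleGraph.chromaticNumber_le_iff_colorable, ← hn]
      exact le_rfl

    have hcol2 := colorable_mul H m n hcoln
    have hchrom2 := hcol2.chromaticNumber_le
    have htnm : (t : ℕ∞) ≤ (n * m : ℕ) := le_trans ht hchrom2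
    have htnm' : t ≤ n * m := by exact_mod_cast htnm
    -- n ≤ s - 1, so n * m ≤ (s-1) * m < t
    have hd : n * m ≤ (s - 1) * m := Nat.mul_le_mul_right m (by omega)
    have hb : (s - 1) * m + m = m * s := by
      have hsp : s - 1 + 1 = s := Nat.succ_pred_eq_of_pos hspos
      calc (s - 1) * m + m = (s - 1 + 1) * m := (Nat.succ_mul _ _).symm
        _ = s * m := by rw [hsp]
        _ = m * s := Nat.mul_comm _ _
    set A := (s - 1) * m with hA
    set B := n * m with hB
    set MS := m * s with hMS
    omega
  -- apply the hypothesis to get a K_s immersion of L(H)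
  obtain ⟨G₀, G₁, hsub0, hchain01, fvK, feK, hendsK, hisol⟩ := hAKL s hslb
  -- blow up
  have hBl0 : IsSubgraphOf (Bl G₀ m) (SimpleGraph.toMG (H.mul m).lineGraph) :=
    bl_sub H G₀ m hsub0
  have hReBl : Reach (Bl G₀ m) (Bl G₁ m) := bl_chain m hchain01
  obtain ⟨D, hfd⟩ := finalData_blow G₁ m s t hts fvK feK hendsK
  obtain ⟨C, hch, cv, ce, hc⟩ := hReBl
  obtain ⟨D₀, hRD⟩ := del_chain hch (ce ⁻¹' D)
  have hIso2 : Iso (EdgeDel C (ce ⁻¹' D)) (EdgeDel (Bl G₁ m) D) := edgeDel_iso cv ce hc D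
  exact immersion_mk ((edgeDel_sub _ _).trans hBl0) (hRD.trans_iso hIso2) hfd

end MG

/-- if `L(H)` satisfies the Abu-Khzam--Langston property then so
does `L(mH)` for every `m ≥ 2`. -/
theorem AKL_of_mul (H : MG) (hAKL : AKLProp H.lineGraph) (m : ℕ) (hm : 2 ≤ m) :
    AKLProp (H.mul m).lineGraph :=
  MG.AKL_of_mul' H hAKL m hm
end

section
/- Let H be a simple graph with chromatic index χ'(H) ≥ t. Then H contains a set of t connected subgraphs, each with at least one edge, that are pairwise edge-disjoint but pairwise have at least one vertex in common. -/
set_option maxHeartbeats 1000000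


namespace ChromAux


variable {V : Type} [DecidableEq V]

/-- A partial proper edge colouring supported on `E`. -/
def PProper (E : Finset (Sym2 V)) (k : ℕ) (c : Sym2 V → Option (Fin k)) : Prop :=
  (∀ e, c e ≠ none → e ∈ E) ∧ (∀ a : V, c s(a,a) = none) ∧
  (∀ a b₁ b₂ : V, b₁ ≠ b₂ → c s(a,b₁) ≠ none → c s(a,b₁) ≠ c s(a,b₂))

/-- colour `γ` is missing at `v`. -/
def miss {k : ℕ} (c : Sym2 V → Option (Fin k)) (v : V) (γ : Fin k) : Prop :=
  ∀ w, c s(v,w) ≠ some γ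

theorem exists_missing (E : Finset (Sym2 V)) (k : ℕ) (c : Sym2 V → Option (Fin k))
    (hsupp : ∀ e, c e ≠ none → e ∈ E)
    (hdeg : ∀ v, (E.filter (fun e => v ∈ e)).card < k) (v : V) :
    ∃ γ : Fin k, miss c v γ := by
  by_contra h
  push_neg at h
  simp only [miss, not_forall, not_not] at h
  have hsub : (Finset.univ.image (some : Fin k → Option (Fin k))) ⊆
      (E.filter (fun e => v ∈ e)).image c := by
    intro o ho
    simp only [Finset.mem_image, Finset.mem_univ, true_and] at ho
    obtain ⟨γ, rfl⟩ := ho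
    obtain ⟨w, hw⟩ := h γ
    refine Finset.mem_image.2 ⟨s(v,w), ?_, hw⟩
    refine Finset.mem_filter.2 ⟨hsupp _ (by simp [hw]), by simp⟩
  have h1 : k ≤ ((E.filter (fun e => v ∈ e)).image c).card := by
    calc k = (Finset.univ.image (some : Fin k → Option (Fin k))).card := by
            rw [Finset.card_image_of_injective _ (Option.some_injective _)]; simp
      _ ≤ _ := Finset.card_le_card hsub
  have h2 := Finset.card_image_le (s := E.filter (fun e => v ∈ e)) (f := c)
  have := hdeg v
  omega

theorem swp_eq_some {k : ℕ} (α β : Fin k) (o : Option (Fin k)) (γ : Fin k) :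
    Option.map (Equiv.swap α β) o = some γ ↔ o = some (Equiv.swap α β γ) := by
  constructor
  · intro h
    obtain ⟨a, ha, hb⟩ := Option.map_eq_some_iff.1 h
    subst ha; rw [← hb, Equiv.swap_apply_self]
  · rintro rfl
    simp [Equiv.swap_apply_self]

open scoped Classical in
/-- the flipped colouring -/
noncomputable def flipFun {k : ℕ} (c : Sym2 V → Option (Fin k)) (α β : Fin k) (S : Set V) :
    Sym2 V → Option (Fin k) :=
  fun e => if (∃ a ∈ e, a ∈ S) then Option.map (Equiv.swap α β) (c e) else c e

open scoped Classical in
theorem flipFun_def {k : ℕ} (c : Sym2 V → Option (Fin k)) (α β : Fin k) (S : Set V)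
    (e : Sym2 V) :
    flipFun c α β S e = if (∃ a ∈ e, a ∈ S) then Option.map (Equiv.swap α β) (c e) else c e := by
  rfl

theorem flipFun_mem {k : ℕ} (c : Sym2 V → Option (Fin k)) (α β : Fin k) (S : Set V)
    {u : V} (hu : u ∈ S) (w : V) :
    flipFun c α β S s(u,w) = Option.map (Equiv.swap α β) (c s(u,w)) := by
  classical
  rw [flipFun_def, if_pos ⟨u, by simp, hu⟩]

theorem flipFun_not_mem {k : ℕ} (c : Sym2 V → Option (Fin k)) (α β : Fin k) (S : Set V)
    (hcl : ∀ u ∈ S, ∀ w, (c s(u,w) = some α ∨ c s(u,w) = some β) → w ∈ S)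
    {u : V} (hu : u ∉ S) (w : V) :
    flipFun c α β S s(u,w) = c s(u,w) := by
  classical
  rw [flipFun_def]
  by_cases h : ∃ a ∈ s(u,w), a ∈ S
  · obtain ⟨a, ha, haS⟩ := h
    rw [Sym2.mem_iff] at ha
    rcases ha with rfl | rfl
    · exact absurd haS hu
    · have hne : ∀ γ : Fin k, c s(u,a) = some γ → γ ≠ α ∧ γ ≠ β := by
        intro γ hγ
        constructor <;> rintro rfl
        · exact hu (hcl a haS u (by rw [Sym2.eq_swap] at hγ; exact Or.inl hγ))
        · exact hu (hcl a haS u (by rw [Sym2.eq_swap] at hγ; exact Or.inr hγ))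
      rw [if_pos ⟨a, by simp, haS⟩]
      cases hco : c s(u,a) with
      | none => rfl
      | some γ =>
        obtain ⟨h1, h2⟩ := hne γ hco
        simp [Equiv.swap_apply_of_ne_of_ne h1 h2]
  · rw [if_neg h]

theorem flipFun_none_iff {k : ℕ} (c : Sym2 V → Option (Fin k)) (α β : Fin k) (S : Set V)
    (e : Sym2 V) : flipFun c α β S e = none ↔ c e = none := by
  classical
  rw [flipFun_def]
  by_cases h : ∃ a ∈ e, a ∈ S
  · rw [if_pos h]; simp
  · rw [if_neg h]

theorem flip_proper (E : Finset (Sym2 V)) (k : ℕ) (c : Sym2 V → Option (Fin k))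
    (hc : PProper E k c) (α β : Fin k) (S : Set V)
    (hcl : ∀ u ∈ S, ∀ w, (c s(u,w) = some α ∨ c s(u,w) = some β) → w ∈ S) :
    PProper E k (flipFun c α β S) := by
  classical
  refine ⟨?_, ?_, ?_⟩
  · intro e he
    apply hc.1
    intro hno
    rw [(flipFun_none_iff c α β S e).2 hno] at he
    exact he rfl
  · intro a
    have := hc.2.1 a
    rw [flipFun_def]
    by_cases h : ∃ b ∈ s(a,a), b ∈ S
    · rw [if_pos h, this]; rfl
    · rw [if_neg h]; exact this
  · intro a b₁ b₂ hne hnn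
    by_cases ha : a ∈ S
    · rw [flipFun_mem c α β S ha b₁, flipFun_mem c α β S ha b₂]
      rw [flipFun_mem c α β S ha b₁] at hnn
      have hnn' : c s(a,b₁) ≠ none := by
        intro h; rw [h] at hnn; exact hnn rfl
      intro hcon
      exact hc.2.2 a b₁ b₂ hne hnn' (Option.map_injective (Equiv.injective _) hcon)
    · rw [flipFun_not_mem c α β S hcl ha b₁, flipFun_not_mem c α β S hcl ha b₂]
      rw [flipFun_not_mem c α β S hcl ha b₁] at hnn
      exact hc.2.2 a b₁ b₂ hne hnn

theorem miss_flip_mem {k : ℕ} (c : Sym2 V → Option (Fin k)) (α β : Fin k) (S : Set V)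
    {u : V} (hu : u ∈ S) (γ : Fin k) :
    miss (flipFun c α β S) u γ ↔ miss c u (Equiv.swap α β γ) := by
  unfold miss
  constructor <;> intro h w <;> have := h w
  · intro hcon
    rw [flipFun_mem c α β S hu w] at this
    exact this ((swp_eq_some α β _ γ).2 hcon)
  · intro hcon
    rw [flipFun_mem c α β S hu w] at hcon
    exact this ((swp_eq_some α β _ γ).1 hcon)

theorem miss_flip_not_mem {k : ℕ} (c : Sym2 V → Option (Fin k)) (α β : Fin k) (S : Set V)
    (hcl : ∀ u ∈ S, ∀ w, (c s(u,w) = some α ∨ c s(u,w) = some β) → w ∈ S)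
    {u : V} (hu : u ∉ S) (γ : Fin k) :
    miss (flipFun c α β S) u γ ↔ miss c u γ := by
  unfold miss
  constructor <;> intro h w <;> have := h w <;>
    rwa [flipFun_not_mem c α β S hcl hu w] at *

theorem miss_flip_other {k : ℕ} (c : Sym2 V → Option (Fin k)) (α β : Fin k) (S : Set V)
    (hcl : ∀ u ∈ S, ∀ w, (c s(u,w) = some α ∨ c s(u,w) = some β) → w ∈ S)
    (u : V) (γ : Fin k) (h1 : γ ≠ α) (h2 : γ ≠ β) :
    miss (flipFun c α β S) u γ ↔ miss c u γ := by
  by_cases hu : u ∈ S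
  · rw [miss_flip_mem c α β S hu γ, Equiv.swap_apply_of_ne_of_ne h1 h2]
  · exact miss_flip_not_mem c α β S hcl hu γ

theorem rotate (E : Finset (Sym2 V)) (k : ℕ) (c : Sym2 V → Option (Fin k))
    (hc : PProper E k c) (x : V) (y : ℕ → V) (q : ℕ) (b : ℕ → Fin k)
    (hyx : ∀ i ≤ q, y i ≠ x)
    (hinj : ∀ i ≤ q, ∀ j ≤ q, y i = y j → i = j)
    (hedge : ∀ i ≤ q, s(x, y i) ∈ E)
    (hcol : ∀ i < q, c s(x, y (i+1)) = some (b i))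
    (hmiss : ∀ i ≤ q, miss c (y i) (b i))
    (hmx : miss c x (b q)) :
    ∃ c', PProper E k c' ∧ (∀ e, c e ≠ none → c' e ≠ none) ∧ c' s(x, y 0) ≠ none := by
  classical
  have hb_inj : ∀ i ≤ q, ∀ j ≤ q, b i = b j → i = j := by
    intro i hi j hj hbij
    by_contra hne
    rcases Nat.lt_or_ge i q with hiq | hiq
    · rcases Nat.lt_or_ge j q with hjq | hjq
      · have h1 := hcol i hiq
        have h2 := hcol j hjq
        have hyne : y (i+1) ≠ y (j+1) := by
          intro hcon
          exact hne (Nat.succ_injective (hinj (i+1) (by omega) (j+1) (by omega) hcon))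
        have := hc.2.2 x (y (i+1)) (y (j+1)) hyne (by rw [h1]; simp)
        rw [h1, h2] at this
        exact this (by rw [hbij])
      · have hjq' : j = q := le_antisymm hj hjq
        exact hmx (y (i+1)) (by rw [hcol i hiq, hbij, hjq'])
    · have hiq' : i = q := le_antisymm hi hiq
      rcases Nat.lt_or_ge j q with hjq | hjq
      · exact hmx (y (j+1)) (by rw [hcol j hjq, ← hbij, hiq'])
      · exact hne ((le_antisymm hi hiq).trans (le_antisymm hj hjq).symm)
  set c' : Sym2 V → Option (Fin k) :=
    fun e => if h : ∃ i, i ≤ q ∧ e = s(x, y i) then some (b (Nat.find h)) else c e with hc'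
  have hval : ∀ i ≤ q, c' s(x, y i) = some (b i) := by
    intro i hi
    have hex : ∃ j, j ≤ q ∧ s(x, y i) = s(x, y j) := ⟨i, hi, rfl⟩
    rw [hc']
    simp only [dif_pos hex]
    congr 1
    have hspec := Nat.find_spec hex
    have heq := hspec.2
    rw [Sym2.eq_iff] at heq
    rcases heq with ⟨-, h2⟩ | ⟨h1, -⟩
    · exact congrArg b (hinj _ hspec.1 i hi h2.symm)
    · exact absurd h1.symm (hyx _ hspec.1)
  have hother : ∀ e, (¬ ∃ i, i ≤ q ∧ e = s(x, y i)) → c' e = c e := by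
    intro e he
    rw [hc']; simp only [dif_neg he]
  have hclass : ∀ (a w : V) (i : ℕ), i ≤ q → s(a,w) = s(x, y i) →
      (a = x ∧ w = y i) ∨ (a = y i ∧ w = x) := by
    intro a w i hi heq
    rw [Sym2.eq_iff] at heq
    tauto
  refine ⟨c', ⟨?_, ?_, ?_⟩, ?_, ?_⟩
  · intro e he
    by_cases h : ∃ i, i ≤ q ∧ e = s(x, y i)
    · obtain ⟨i, hi, rfl⟩ := h
      exact hedge i hi
    · rw [hother e h] at he
      exact hc.1 e he
  · intro a
    have h : ¬ ∃ i, i ≤ q ∧ s(a,a) = s(x, y i) := by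
      rintro ⟨i, hi, heq⟩
      rcases hclass a a i hi heq with ⟨h1, h2⟩ | ⟨h1, h2⟩
      · exact hyx i hi (h2.symm.trans h1)
      · exact hyx i hi (h1.symm.trans h2)
    rw [hother _ h]
    exact hc.2.1 a
  · intro a w₁ w₂ hw hnn
    by_cases h₁ : ∃ i, i ≤ q ∧ s(a,w₁) = s(x, y i) <;>
      by_cases h₂ : ∃ i, i ≤ q ∧ s(a,w₂) = s(x, y i)
    · obtain ⟨i, hi, hei⟩ := h₁
      obtain ⟨j, hj, hej⟩ := h₂
      rw [hei, hej, hval i hi, hval j hj]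
      intro hcon
      have hij : i = j := hb_inj i hi j hj (Option.some_injective _ hcon)
      subst hij
      rw [← hej] at hei
      rw [Sym2.eq_iff] at hei
      rcases hei with ⟨-, h2⟩ | ⟨h1', h2'⟩
      · exact hw h2
      · exact hw (h2'.trans h1')
    · obtain ⟨i, hi, hei⟩ := h₁
      rw [hei, hval i hi, hother _ h₂]
      rcases hclass a w₁ i hi hei with ⟨hax, hwy⟩ | ⟨hay, hwx⟩
      · rw [hax]
        rcases Nat.lt_or_ge i q with hiq | hiq
        · intro hcon
          have hw₂ : w₂ ≠ y (i+1) := by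
            rintro rfl
            exact h₂ ⟨i+1, by omega, by rw [hax]⟩
          have := hc.2.2 x (y (i+1)) w₂ (fun hh => hw₂ hh.symm) (by rw [hcol i hiq]; simp)
          rw [hcol i hiq] at this
          exact this hcon
        · have hiq' : i = q := le_antisymm hi hiq
          intro hcon
          exact hmx w₂ (by rw [← hiq']; exact hcon.symm)
      · rw [hay]
        intro hcon
        exact hmiss i hi w₂ hcon.symm
    · obtain ⟨j, hj, hej⟩ := h₂
      rw [hej, hval j hj, hother _ h₁]
      rcases hclass a w₂ j hj hej with ⟨hax, hwy⟩ | ⟨hay, hwx⟩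
      · rw [hax]
        rcases Nat.lt_or_ge j q with hjq | hjq
        · intro hcon
          have hw₁ : w₁ ≠ y (j+1) := by
            rintro rfl
            exact h₁ ⟨j+1, by omega, by rw [hax]⟩
          have := hc.2.2 x (y (j+1)) w₁ (fun hh => hw₁ hh.symm) (by rw [hcol j hjq]; simp)
          rw [hcol j hjq] at this
          exact this hcon.symm
        · have hjq' : j = q := le_antisymm hj hjq
          intro hcon
          exact hmx w₁ (by rw [← hjq']; exact hcon)
      · rw [hay]
        exact hmiss j hj w₁
    · rw [hother _ h₁, hother _ h₂]
      rw [hother _ h₁] at hnn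
      exact hc.2.2 a w₁ w₂ hw hnn
  · intro e he
    by_cases h : ∃ i, i ≤ q ∧ e = s(x, y i)
    · obtain ⟨i, hi, rfl⟩ := h
      rw [hval i hi]; simp
    · rw [hother e h]; exact he
  · rw [hval 0 (Nat.zero_le q)]; simp



variable {V : Type} [DecidableEq V]

open SimpleGraph

theorem getVert_inj {G : SimpleGraph V} : ∀ {u v : V} (p : G.Walk u v),
    p.support.Nodup → ∀ i j, i ≤ p.length → j ≤ p.length →
    p.getVert i = p.getVert j → i = j := by
  intro u v p
  induction p with
  | nil => intro _ i j hi hj _; simp at hi hj; omega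
  | @cons a b c h q ih =>
    intro hnodup i j hi hj heq
    rw [Walk.support_cons, List.nodup_cons] at hnodup
    rw [Walk.length_cons] at hi hj
    match i, j with
    | 0, 0 => rfl
    | 0, (j+1) =>
      exfalso
      apply hnodup.1
      rw [Walk.getVert_cons_succ] at heq
      rw [Walk.getVert_zero] at heq
      rw [Walk.mem_support_iff_exists_getVert]
      exact ⟨j, heq.symm, by omega⟩
    | (i+1), 0 =>
      exfalso
      apply hnodup.1
      rw [Walk.getVert_cons_succ] at heq
      rw [Walk.getVert_zero] at heq
      rw [Walk.mem_support_iff_exists_getVert]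
      exact ⟨i, heq, by omega⟩
    | (i+1), (j+1) =>
      rw [Walk.getVert_cons_succ, Walk.getVert_cons_succ] at heq
      have := ih hnodup.2 i j (by omega) (by omega) heq
      omega

theorem no_three_ends {D : SimpleGraph V}
    (hdeg2 : ∀ z w₁ w₂ w₃, D.Adj z w₁ → D.Adj z w₂ → D.Adj z w₃ →
      w₁ = w₂ ∨ w₁ = w₃ ∨ w₂ = w₃)
    {x u v : V} (hxu : x ≠ u) (hxv : x ≠ v) (huv : u ≠ v)
    (h1x : ∀ w₁ w₂, D.Adj x w₁ → D.Adj x w₂ → w₁ = w₂)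
    (h1u : ∀ w₁ w₂, D.Adj u w₁ → D.Adj u w₂ → w₁ = w₂)
    (h1v : ∀ w₁ w₂, D.Adj v w₁ → D.Adj v w₂ → w₁ = w₂)
    (hru : D.Reachable u v) (hrx : D.Reachable x u) : False := by
  classical
  obtain ⟨w0⟩ := hru
  let p : D.Walk u v := w0.toPath.1
  have hp : p.IsPath := w0.toPath.2
  have hnd : p.support.Nodup := hp.support_nodup
  have hlen : 0 < p.length := by
    rcases Nat.eq_zero_or_pos p.length with h0 | h0
    · exact absurd (Walk.eq_of_length_eq_zero h0) huv
    · exact h0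
  have hxsup : x ∉ p.support := by
    intro hx
    rw [Walk.mem_support_iff_exists_getVert] at hx
    obtain ⟨n, hn, hnle⟩ := hx
    have hn0 : n ≠ 0 := by
      rintro rfl
      rw [Walk.getVert_zero] at hn
      exact hxu hn.symm
    have hnl : n ≠ p.length := by
      rintro rfl
      rw [Walk.getVert_length] at hn
      exact hxv hn.symm
    have hA1 : D.Adj x (p.getVert (n-1)) := by
      have := p.adj_getVert_succ (i := n-1) (by omega)
      rw [show n - 1 + 1 = n by omega, hn] at this
      exact this.symm
    have hA2 : D.Adj x (p.getVert (n+1)) := by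
      have := p.adj_getVert_succ (i := n) (by omega)
      rw [hn] at this
      exact this
    have := h1x _ _ hA1 hA2
    have := getVert_inj p hnd (n-1) (n+1) (by omega) (by omega) this
    omega
  obtain ⟨w1⟩ := hrx
  have hex : ∃ n, w1.getVert n ∈ p.support := by
    refine ⟨w1.length, ?_⟩
    rw [Walk.getVert_length]
    exact Walk.start_mem_support p
  let N := Nat.find hex
  have hN : w1.getVert N ∈ p.support := Nat.find_spec hex
  have hN0 : N ≠ 0 := by
    intro h0
    have := hN
    rw [h0, Walk.getVert_zero] at this
    exact hxsup this
  have hNle : N ≤ w1.length := Nat.find_le (by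
    rw [Walk.getVert_length]; exact Walk.start_mem_support p)
  have hz' : w1.getVert (N-1) ∉ p.support := Nat.find_min hex (by omega)
  have hadj : D.Adj (w1.getVert (N-1)) (w1.getVert N) := by
    have := w1.adj_getVert_succ (i := N-1) (by omega)
    rw [show N - 1 + 1 = N by omega] at this
    exact this
  rw [Walk.mem_support_iff_exists_getVert] at hN
  obtain ⟨m, hm, hmle⟩ := hN
  rcases Nat.eq_zero_or_pos m with hm0 | hm0
  · -- z = u
    rw [hm0, Walk.getVert_zero] at hm
    have hadj1 : D.Adj u (w1.getVert (N-1)) := by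
      have h' : D.Adj (w1.getVert N) (w1.getVert (N-1)) := hadj.symm
      rwa [← hm] at h'
    have hadj2 : D.Adj u (p.getVert 1) := by
      have := p.adj_getVert_succ (i := 0) hlen
      rwa [Walk.getVert_zero] at this
    have := h1u _ _ hadj1 hadj2
    apply hz'
    rw [this, Walk.mem_support_iff_exists_getVert]
    exact ⟨1, rfl, by omega⟩
  rcases Nat.lt_or_ge m p.length with hml | hml
  · -- internal
    have hadjz : D.Adj (p.getVert m) (w1.getVert (N-1)) := by rw [hm]; exact hadj.symm
    have hadjm1 : D.Adj (p.getVert m) (p.getVert (m-1)) := by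
      have := p.adj_getVert_succ (i := m-1) (by omega)
      rw [show m - 1 + 1 = m by omega] at this
      exact this.symm
    have hadjp1 : D.Adj (p.getVert m) (p.getVert (m+1)) :=
      p.adj_getVert_succ (i := m) hml
    rcases hdeg2 _ _ _ _ hadjz hadjm1 hadjp1 with h | h | h
    · apply hz'
      rw [h, Walk.mem_support_iff_exists_getVert]
      exact ⟨m-1, rfl, by omega⟩
    · apply hz'
      rw [h, Walk.mem_support_iff_exists_getVert]
      exact ⟨m+1, rfl, by omega⟩
    · have := getVert_inj p hnd (m-1) (m+1) (by omega) (by omega) h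
      omega
  · -- z = v
    have hmeq : m = p.length := le_antisymm hmle hml
    rw [hmeq, Walk.getVert_length] at hm
    have hadj1 : D.Adj v (w1.getVert (N-1)) := by
      have h' : D.Adj (w1.getVert N) (w1.getVert (N-1)) := hadj.symm
      rwa [← hm] at h'
    have hadj2 : D.Adj v (p.getVert (p.length - 1)) := by
      have := p.adj_getVert_succ (i := p.length - 1) (by omega)
      rw [show p.length - 1 + 1 = p.length by omega, Walk.getVert_length] at this
      exact this.symm
    have := h1v _ _ hadj1 hadj2
    apply hz'
    rw [this, Walk.mem_support_iff_exists_getVert]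
    exact ⟨p.length - 1, rfl, by omega⟩


theorem not_miss_iff {k : ℕ} (c : Sym2 V → Option (Fin k)) (v : V) (γ : Fin k) :
    ¬ miss c v γ ↔ ∃ w, c s(v,w) = some γ := by
  simp [miss]

theorem extend_coloring (E : Finset (Sym2 V)) (k : ℕ)
    (hdeg : ∀ v, (E.filter (fun e => v ∈ e)).card < k)
    (c : Sym2 V → Option (Fin k)) (hc : PProper E k c)
    (x y₀ : V) (hxy : s(x,y₀) ∈ E) (hxyne : y₀ ≠ x) (hnone : c s(x,y₀) = none) :
    ∃ c', PProper E k c' ∧ (∀ e, c e ≠ none → c' e ≠ none) ∧ c' s(x,y₀) ≠ none := by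
  classical
  have hmex : ∀ v : V, ∃ γ, miss c v γ := exists_missing E k c hc.1 hdeg
  choose m hmspec using hmex
  set α := m x with hαdef
  -- the fan sequence
  let g : ℕ → V := fun n => Nat.rec y₀ (fun _ prev =>
      if h : ∃ w, c s(x,w) = some (m prev) then h.choose else prev) n
  have hg0 : g 0 = y₀ := rfl
  have hgsucc : ∀ n, (∃ w, c s(x,w) = some (m (g n))) →
      c s(x, g (n+1)) = some (m (g n)) := by
    intro n h
    have : g (n+1) = if h' : ∃ w, c s(x,w) = some (m (g n)) then h'.choose else g n := rfl
    rw [this, dif_pos h]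
    exact h.choose_spec
  -- stopping condition
  have hQ : ∃ n, miss c x (m (g n)) ∨ ∃ j ≤ n, g (n+1) = g j := by
    by_contra hcon
    push_neg at hcon
    have hused : ∀ n, c s(x, g (n+1)) = some (m (g n)) := by
      intro n
      exact hgsucc n ((not_miss_iff c x (m (g n))).1 (hcon n).1)
    have hnewv : ∀ n, ∀ j ≤ n, g (n+1) ≠ g j := fun n => (hcon n).2
    have hginj : Function.Injective (fun n => g (n+1)) := by
      intro n n' h
      simp only [] at h
      by_contra hne
      rcases Nat.lt_or_ge n n' with hlt | hge
      · exact hnewv n' (n+1) (by omega) h.symm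
      · exact hnewv n (n'+1) (by omega) h
    have hmem : ∀ n, g (n+1) ∈ ((fun w => s(x,w)) ⁻¹' (↑E : Set (Sym2 V))) := by
      intro n
      have := hused n
      exact hc.1 _ (by rw [this]; simp)
    have hfin : ((fun w : V => s(x,w)) ⁻¹' (↑E : Set (Sym2 V))).Finite := by
      apply Set.Finite.preimage _ E.finite_toSet
      intro w _ w' _ h
      rw [Sym2.eq_iff] at h
      rcases h with ⟨-, h⟩ | ⟨h1, h2⟩
      · exact h
      · rw [h2, ← h1]
    exact (Set.infinite_of_injective_forall_mem hginj hmem) hfin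
  haveI : DecidablePred fun n => miss c x (m (g n)) ∨ ∃ j ≤ n, g (n + 1) = g j :=
    fun _ => Classical.propDecidable _
  set N := Nat.find hQ with hNdef
  have hnotQ : ∀ n < N, ¬ (miss c x (m (g n)) ∨ ∃ j ≤ n, g (n+1) = g j) :=
    fun n h => Nat.find_min hQ h
  have hused_lt : ∀ n < N, c s(x, g (n+1)) = some (m (g n)) := by
    intro n hn
    have h1 := hnotQ n hn
    push_neg at h1
    exact hgsucc n ((not_miss_iff c x (m (g n))).1 h1.1)
  have hnew : ∀ n < N, ∀ j ≤ n, g (n+1) ≠ g j := by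
    intro n hn
    have h1 := hnotQ n hn
    push_neg at h1
    exact h1.2
  have hdist : ∀ i ≤ N, ∀ j < i, g i ≠ g j := by
    intro i hi j hj
    have hi1 : 1 ≤ i := by omega
    have : i - 1 < N := by omega
    have := hnew (i-1) this j (by omega)
    rwa [show i - 1 + 1 = i by omega] at this
  have hinj : ∀ i ≤ N, ∀ j ≤ N, g i = g j → i = j := by
    intro i hi j hj heq
    rcases lt_trichotomy i j with h | h | h
    · exact absurd heq.symm (hdist j hj i h)
    · exact h
    · exact absurd heq (hdist i hi j h)
  have hgx : ∀ i ≤ N, g i ≠ x := by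
    intro i hi
    rcases Nat.eq_zero_or_pos i with rfl | hpos
    · rw [hg0]; exact hxyne
    · intro hcon
      have := hused_lt (i-1) (by omega)
      rw [show i - 1 + 1 = i by omega, hcon, hc.2.1 x] at this
      cases this
  have hedge : ∀ i ≤ N, s(x, g i) ∈ E := by
    intro i hi
    rcases Nat.eq_zero_or_pos i with rfl | hpos
    · rw [hg0]; exact hxy
    · have := hused_lt (i-1) (by omega)
      rw [show i - 1 + 1 = i by omega] at this
      exact hc.1 _ (by rw [this]; simp)
  by_cases hA : miss c x (m (g N))
  · -- rotate the whole fan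
    obtain ⟨c', hc', hpres, hcol0⟩ := rotate E k c hc x g N (fun i => m (g i))
      hgx hinj hedge (fun i hi => hused_lt i hi) (fun i _ => hmspec (g i)) hA
    rw [hg0] at hcol0
    exact ⟨c', hc', hpres, hcol0⟩
  · -- repeated colour case
    have hQN := Nat.find_spec hQ
    rw [← hNdef] at hQN
    rcases hQN with h | hrep
    · exact absurd h hA
    obtain ⟨j, hjN, hgrep⟩ := hrep
    have husedN : ∃ w, c s(x,w) = some (m (g N)) := (not_miss_iff c x (m (g N))).1 hA
    have hNedge : c s(x, g (N+1)) = some (m (g N)) := hgsucc N husedN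
    have hj0 : j ≠ 0 := by
      rintro rfl
      rw [hgrep, hg0, hnone] at hNedge
      cases hNedge
    set β := m (g N) with hβdef
    have hβ : c s(x, g j) = some β := by rw [← hgrep]; exact hNedge
    have hjm1 : j - 1 < N := by omega
    have hmjβ : m (g (j-1)) = β := by
      have := hused_lt (j-1) hjm1
      rw [show j - 1 + 1 = j by omega, hβ] at this
      exact (Option.some_injective _ this).symm
    have hαβ : α ≠ β := by
      intro hcon
      have hβ' : c s(x, g j) = some α := by rw [hcon]; exact hβ
      rw [hαdef] at hβ'
      exact hmspec x (g j) hβ'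
    have hm_ne_α : ∀ i ≤ N, m (g i) ≠ α := by
      intro i hi hcon
      rcases Nat.lt_or_ge i N with hiN | hiN
      · exact hmspec x (g (i+1)) (by rw [← hαdef, ← hcon]; exact hused_lt i hiN)
      · have : i = N := by omega
        rw [this] at hcon
        exact hαβ (hcon.symm.trans hβdef.symm)
    have hm_ne_β : ∀ i < N, i ≠ j - 1 → m (g i) ≠ β := by
      intro i hiN hij hcon
      have h1 := hused_lt i hiN
      have hne : g (i+1) ≠ g j := by
        intro hcon2
        have := hinj (i+1) (by omega) j (by omega) hcon2
        omega
      have := hc.2.2 x (g (i+1)) (g j) hne (by rw [h1]; simp)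
      rw [h1, hβ, hcon] at this
      exact this rfl
    -- the α/β subgraph
    set Dadj : V → V → Prop := fun a b => c s(a,b) = some α ∨ c s(a,b) = some β
      with hDdef
    have hDsymm : Symmetric Dadj := by
      intro a b h
      have h2 : c s(a,b) = some α ∨ c s(a,b) = some β := h
      have h3 : c s(b,a) = some α ∨ c s(b,a) = some β := by
        rwa [Sym2.eq_swap] at h2
      exact h3
    have hDirr : ∀ a, ¬ Dadj a a := by
      rintro a (h | h) <;> rw [hc.2.1 a] at h <;> cases h
    set D' : SimpleGraph V := ⟨Dadj, ⟨by intro a b h; exact hDsymm h⟩, ⟨by intro a; exact hDirr a⟩⟩ with hD'def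
    have huniq : ∀ (z w w' : V) (γ : Fin k), w ≠ w' →
        c s(z,w) = some γ → c s(z,w') = some γ → False := by
      intro z w w' γ hne h1 h2
      exact hc.2.2 z w w' hne (by rw [h1]; simp) (h1.trans h2.symm)
    have hdeg1 : ∀ (z : V) (γ δ : Fin k), γ ≠ δ → miss c z δ →
        (∀ w, Dadj z w → c s(z,w) = some γ ∨ c s(z,w) = some δ) →
        ∀ w₁ w₂, D'.Adj z w₁ → D'.Adj z w₂ → w₁ = w₂ := by
      intro z γ δ hγδ hmz hcols w₁ w₂ ha1 ha2
      by_contra hne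
      have e1 : c s(z,w₁) = some γ := by
        rcases hcols w₁ ha1 with h | h
        · exact h
        · exact absurd h (hmz w₁)
      have e2 : c s(z,w₂) = some γ := by
        rcases hcols w₂ ha2 with h | h
        · exact h
        · exact absurd h (hmz w₂)
      exact huniq z w₁ w₂ γ hne e1 e2
    have hcolsαβ : ∀ z w, Dadj z w → c s(z,w) = some α ∨ c s(z,w) = some β := by
      intro z w h; exact h
    have hcolsβα : ∀ z w, Dadj z w → c s(z,w) = some β ∨ c s(z,w) = some α := by
      intro z w h; exact h.symm
    have hdeg1β : ∀ z, miss c z β → ∀ w₁ w₂, D'.Adj z w₁ → D'.Adj z w₂ → w₁ = w₂ :=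
      fun z hmz => hdeg1 z α β hαβ hmz (hcolsαβ z)
    have hdeg1α : ∀ z, miss c z α → ∀ w₁ w₂, D'.Adj z w₁ → D'.Adj z w₂ → w₁ = w₂ :=
      fun z hmz => hdeg1 z β α (Ne.symm hαβ) hmz (hcolsβα z)
    have hdeg2 : ∀ z w₁ w₂ w₃, D'.Adj z w₁ → D'.Adj z w₂ → D'.Adj z w₃ →
        w₁ = w₂ ∨ w₁ = w₃ ∨ w₂ = w₃ := by
      intro z w₁ w₂ w₃ h1 h2 h3
      by_contra hno
      push_neg at hno
      obtain ⟨n12, n13, n23⟩ := hno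
      rcases h1 with e1 | e1 <;> rcases h2 with e2 | e2 <;> rcases h3 with e3 | e3
      · exact huniq z w₁ w₂ α n12 e1 e2
      · exact huniq z w₁ w₂ α n12 e1 e2
      · exact huniq z w₁ w₃ α n13 e1 e3
      · exact huniq z w₂ w₃ β n23 e2 e3
      · exact huniq z w₂ w₃ α n23 e2 e3
      · exact huniq z w₁ w₃ β n13 e1 e3
      · exact huniq z w₁ w₂ β n12 e1 e2
      · exact huniq z w₁ w₂ β n12 e1 e2
    set S : Set V := {u | Relation.ReflTransGen Dadj x u} with hSdef
    have hSclosed : ∀ u ∈ S, ∀ w, (c s(u,w) = some α ∨ c s(u,w) = some β) → w ∈ S :=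
      fun u hu w h => Relation.ReflTransGen.tail hu h
    have hrtg_reach : ∀ a b : V, Relation.ReflTransGen Dadj a b → D'.Reachable a b := by
      intro a b h
      rw [SimpleGraph.reachable_iff_reflTransGen]
      exact h
    have hrtg_symm : ∀ a b : V, Relation.ReflTransGen Dadj a b →
        Relation.ReflTransGen Dadj b a := by
      intro a b h
      induction h with
      | refl => exact Relation.ReflTransGen.refl
      | tail _ hstep ih =>
        exact (Relation.ReflTransGen.single (hDsymm hstep)).trans ih
    rcases Classical.em (g (j-1) ∈ S) with hjS | hjS
    · -- flip the component of g N
      have hgNS : g N ∉ S := by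
        intro hgN
        refine no_three_ends (x := x) (u := g (j-1)) (v := g N) hdeg2 ?_ ?_ ?_ ?_ ?_ ?_ ?_ ?_
        · exact Ne.symm (hgx (j-1) (by omega))
        · exact Ne.symm (hgx N le_rfl)
        · intro hcon
          have := hinj (j-1) (by omega) N le_rfl hcon
          omega
        · exact hdeg1α x (hmspec x)
        · exact hdeg1β (g (j-1)) (hmjβ ▸ hmspec (g (j-1)))
        · exact hdeg1β (g N) (hmspec (g N))
        · exact hrtg_reach _ _ (Relation.ReflTransGen.trans (hrtg_symm _ _ hjS) hgN)
        · exact hrtg_reach _ _ hjS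
      set S' : Set V := {u | Relation.ReflTransGen Dadj (g N) u} with hS'def
      have hS'closed : ∀ u ∈ S', ∀ w,
          (c s(u,w) = some α ∨ c s(u,w) = some β) → w ∈ S' :=
        fun u hu w h => Relation.ReflTransGen.tail hu h
      have hxS' : x ∉ S' := by
        intro hx
        exact hgNS (hrtg_symm _ _ hx)
      have hjS' : g (j-1) ∉ S' := by
        intro hj'
        exact hgNS (Relation.ReflTransGen.trans hjS (hrtg_symm _ _ hj'))
      have hc₂ : PProper E k (flipFun c α β S') := flip_proper E k c hc α β S' hS'closed
      have hgNS'mem : g N ∈ S' := Relation.ReflTransGen.refl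
      obtain ⟨c₃, hc₃, hpres, hcol0⟩ := rotate E k (flipFun c α β S') hc₂ x g N
        (fun i => if i = N then α else m (g i)) hgx hinj hedge
        (by
          intro i hi
          show flipFun c α β S' s(x, g (i+1)) = some (if i = N then α else m (g i))
          rw [flipFun_not_mem c α β S' hS'closed hxS' (g (i+1)),
            if_neg (show ¬ i = N by omega)]
          exact hused_lt i hi)
        (by
          intro i hi
          show miss (flipFun c α β S') (g i) (if i = N then α else m (g i))
          rcases Nat.lt_or_ge i N with hiN | hiN
          · rw [if_neg (show ¬ i = N by omega)]
            by_cases hij : i = j - 1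
            · rw [(miss_flip_not_mem c α β S' hS'closed
                (show g i ∉ S' by rw [hij]; exact hjS') (m (g i)))]
              exact hmspec (g i)
            · rw [miss_flip_other c α β S' hS'closed (g i) (m (g i))
                (hm_ne_α i hi) (hm_ne_β i hiN hij)]
              exact hmspec (g i)
          · have hiN' : i = N := by omega
            rw [hiN', if_pos rfl]
            rw [miss_flip_mem c α β S' hgNS'mem α, Equiv.swap_apply_left]
            exact hmspec (g N))
        (by
          show miss (flipFun c α β S') x (if N = N then α else m (g N))
          rw [if_pos rfl]
          rw [miss_flip_not_mem c α β S' hS'closed hxS' α]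
          exact hmspec x)
      rw [hg0] at hcol0
      refine ⟨c₃, hc₃, ?_, hcol0⟩
      intro e he
      apply hpres
      intro hcon
      exact he ((flipFun_none_iff c α β S' e).1 hcon)
    · -- flip the component of x, rotate up to j-1
      have hc₂ : PProper E k (flipFun c α β S) := flip_proper E k c hc α β S hSclosed
      have hxSmem : x ∈ S := Relation.ReflTransGen.refl
      obtain ⟨c₃, hc₃, hpres, hcol0⟩ := rotate E k (flipFun c α β S) hc₂ x g (j-1)
        (fun i => m (g i))
        (fun i hi => hgx i (by omega)) (fun i hi j' hj' => hinj i (by omega) j' (by omega))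
        (fun i hi => hedge i (by omega))
        (by
          intro i hi
          show flipFun c α β S s(x, g (i+1)) = some (m (g i))
          rw [flipFun_mem c α β S hxSmem (g (i+1)), hused_lt i (by omega)]
          have h1 : m (g i) ≠ α := hm_ne_α i (by omega)
          have h2 : m (g i) ≠ β := hm_ne_β i (by omega) (by omega)
          simp [Equiv.swap_apply_of_ne_of_ne h1 h2])
        (by
          intro i hi
          show miss (flipFun c α β S) (g i) (m (g i))
          rcases Nat.lt_or_ge i (j-1) with hij | hij
          · rw [miss_flip_other c α β S hSclosed (g i) (m (g i))
              (hm_ne_α i (by omega)) (hm_ne_β i (by omega) (by omega))]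
            exact hmspec (g i)
          · have hieq : i = j - 1 := by omega
            rw [hieq, miss_flip_not_mem c α β S hSclosed hjS (m (g (j-1)))]
            exact hmspec (g (j-1)))
        (by
          show miss (flipFun c α β S) x (m (g (j-1)))
          rw [hmjβ, miss_flip_mem c α β S hxSmem β, Equiv.swap_apply_right]
          exact hmspec x)
      rw [hg0] at hcol0
      refine ⟨c₃, hc₃, ?_, hcol0⟩
      intro e he
      apply hpres
      intro hcon
      exact he ((flipFun_none_iff c α β S e).1 hcon)


theorem vizing (E : Finset (Sym2 V)) (k : ℕ) (hE : ∀ e ∈ E, ¬ e.IsDiag)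
    (hdeg : ∀ v, (E.filter (fun e => v ∈ e)).card < k) :
    ∃ c : Sym2 V → Option (Fin k), PProper E k c ∧ ∀ e ∈ E, c e ≠ none := by
  classical
  suffices h : ∀ (n : ℕ) (c : Sym2 V → Option (Fin k)), PProper E k c →
      (E.filter (fun e => c e = none)).card ≤ n →
      ∃ c', PProper E k c' ∧ ∀ e ∈ E, c' e ≠ none by
    refine h E.card (fun _ => none) ⟨?_, ?_, ?_⟩ ?_
    · intro e he; exact absurd rfl he
    · intro a; rfl
    · intro a b₁ b₂ _ hnn; exact absurd rfl hnn
    · exact Finset.card_le_card (Finset.filter_subset _ _)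
  intro n
  induction n with
  | zero =>
    intro c hc hcard
    refine ⟨c, hc, ?_⟩
    intro e he hnone
    have : e ∈ E.filter (fun e => c e = none) := Finset.mem_filter.2 ⟨he, hnone⟩
    have := Finset.card_pos.2 ⟨e, this⟩
    omega
  | succ n ih =>
    intro c hc hcard
    by_cases hall : ∀ e ∈ E, c e ≠ none
    · exact ⟨c, hc, hall⟩
    · push_neg at hall
      obtain ⟨e, heE, hnone⟩ := hall
      -- decompose e
      induction e using Sym2.inductionOn with
      | hf x y₀ =>
        have hyne : y₀ ≠ x := by
          intro hcon
          apply hE _ heE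
          rw [Sym2.mk_isDiag_iff]
          exact hcon.symm
        obtain ⟨c', hc', hpres, hcole⟩ := extend_coloring E k hdeg c hc x y₀
          heE hyne hnone
        apply ih c' hc'
        have hsub : E.filter (fun f => c' f = none) ⊆
            (E.filter (fun f => c f = none)).erase s(x,y₀) := by
          intro f hf
          rw [Finset.mem_filter] at hf
          refine Finset.mem_erase.2 ⟨?_, Finset.mem_filter.2 ⟨hf.1, ?_⟩⟩
          · intro hcon
            rw [hcon] at hf
            exact hcole hf.2
          · by_contra hcon
            exact (hpres f hcon) hf.2
        have h1 := Finset.card_le_card hsub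
        have h2 : s(x,y₀) ∈ E.filter (fun f => c f = none) :=
          Finset.mem_filter.2 ⟨heE, hnone⟩
        have h3 := Finset.card_erase_of_mem h2
        have h4 := Finset.card_pos.2 ⟨_, h2⟩
        omega

def ColorableF (E : Finset (Sym2 V)) (n : ℕ) : Prop :=
  ∃ C : Sym2 V → Fin n, ∀ e ∈ E, ∀ f ∈ E, e ≠ f → (∃ v : V, v ∈ e ∧ v ∈ f) → C e ≠ C f

theorem sym2_eq_of_mem {b : Sym2 V} {v w : V} (hv : v ∈ b) (hw : w ∈ b) (hne : w ≠ v) :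
    b = s(v, w) := by
  rw [← Sym2.other_spec' hv] at hw ⊢
  rw [Sym2.mem_iff] at hw
  rcases hw with rfl | rfl
  · exact absurd rfl hne
  · rfl

theorem vizing_colorable (E : Finset (Sym2 V)) (k : ℕ) (hk : 0 < k)
    (hE : ∀ e ∈ E, ¬ e.IsDiag)
    (hdeg : ∀ v, (E.filter (fun e => v ∈ e)).card < k) : ColorableF E k := by
  obtain ⟨c, hc, hall⟩ := vizing E k hE hdeg
  refine ⟨fun e => (c e).getD ⟨0, hk⟩, ?_⟩
  intro e he f hf hne ⟨v, hve, hvf⟩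
  have he' : e = s(v, Sym2.Mem.other' hve) := (Sym2.other_spec' hve).symm
  have hf' : f = s(v, Sym2.Mem.other' hvf) := (Sym2.other_spec' hvf).symm
  have hone : Sym2.Mem.other' hve ≠ Sym2.Mem.other' hvf := by
    intro hcon
    apply hne
    rw [he', hf', hcon]
  have := hc.2.2 v (Sym2.Mem.other' hve) (Sym2.Mem.other' hvf) hone
    (by rw [← he']; exact hall e he)
  rw [← he', ← hf'] at this
  have hnn := hall e he
  have hnn2 := hall f hf
  intro hcon
  obtain ⟨γ, hγ⟩ := Option.ne_none_iff_exists'.1 hnn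
  obtain ⟨δ, hδ⟩ := Option.ne_none_iff_exists'.1 hnn2
  simp only [hγ, hδ, Option.getD_some] at hcon
  exact this (by rw [hγ, hδ, hcon])

theorem exists_big_star (E : Finset (Sym2 V)) (k : ℕ) (hk : 0 < k)
    (hE : ∀ e ∈ E, ¬ e.IsDiag)
    (h : ¬ ColorableF E k) : ∃ v : V, k ≤ (E.filter (fun e => v ∈ e)).card := by
  by_contra hcon
  push_neg at hcon
  exact h (vizing_colorable E k hk hE (fun v => hcon v))

theorem rtg_symm {α : Sort _} {r : α → α → Prop} (hs : ∀ a b, r a b → r b a) :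
    ∀ a b, Relation.ReflTransGen r a b → Relation.ReflTransGen r b a := by
  intro a b h
  induction h with
  | refl => exact Relation.ReflTransGen.refl
  | tail _ hstep ih =>
    exact (Relation.ReflTransGen.single (hs _ _ hstep)).trans ih

/-- edge-connectivity relation within `S` -/
def EC (S : Set (Sym2 V)) : Sym2 V → Sym2 V → Prop :=
  fun a b => a ∈ S ∧ b ∈ S ∧ ∃ v : V, v ∈ a ∧ v ∈ b

def GoodFam (E : Finset (Sym2 V)) (t : ℕ) : Prop :=
  ∃ F : Fin t → Set (Sym2 V),
    (∀ i, F i ⊆ ↑E) ∧ (∀ i, (F i).Nonempty) ∧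
    (∀ i, ∀ a ∈ F i, ∀ b ∈ F i, Relation.ReflTransGen (EC (F i)) a b) ∧
    (Pairwise fun i j => Disjoint (F i) (F j)) ∧
    (∀ i j, i ≠ j → ∃ v : V, (∃ e ∈ F i, v ∈ e) ∧ (∃ e ∈ F j, v ∈ e))

theorem GoodFam_mono {E₁ E₂ : Finset (Sym2 V)} (h : E₁ ⊆ E₂) {t : ℕ}
    (hg : GoodFam E₁ t) : GoodFam E₂ t := by
  obtain ⟨F, h1, h2, h3, h4, h5⟩ := hg
  exact ⟨F, fun i => (h1 i).trans (by exact_mod_cast h), h2, h3, h4, h5⟩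

theorem perm_avoid (k : ℕ) (A B : Finset (Fin k)) (h : A.card + B.card ≤ k) :
    ∃ σ : Equiv.Perm (Fin k), ∀ b ∈ B, σ b ∉ A := by
  classical
  have h1 : B.card ≤ Aᶜ.card := by
    rw [Finset.card_compl]
    have : Fintype.card (Fin k) = k := Fintype.card_fin k
    omega
  obtain ⟨B', hB'sub, hB'card⟩ := Finset.exists_subset_card_eq h1
  have hcard : B.card = B'.card := hB'card.symm
  have e : {x // x ∈ B} ≃ {x // x ∈ B'} := Finset.equivOfCardEq hcard
  refine ⟨Equiv.extendSubtype e, ?_⟩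
  intro b hb
  have : Equiv.extendSubtype e b ∈ B' := Equiv.extendSubtype_mem e b hb
  have := hB'sub this
  rwa [Finset.mem_compl] at this


theorem main_finite (k : ℕ) (hk : 1 ≤ k) :
    ∀ (n : ℕ) (E : Finset (Sym2 V)), E.card ≤ n → (∀ e ∈ E, ¬ e.IsDiag) →
      ¬ ColorableF E k → GoodFam E (k+1) := by
  classical
  intro n
  induction n with
  | zero =>
    intro E hcard hE hcol
    exfalso
    apply hcol
    have hempty : E = ∅ := Finset.card_eq_zero.1 (by omega)
    exact ⟨fun _ => ⟨0, hk⟩, by simp [hempty]⟩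
  | succ n ih =>
    intro E hcard hE hcol
    by_cases hbig : ∃ v : V, k + 1 ≤ (E.filter (fun e => v ∈ e)).card
    · -- a vertex of degree ≥ k+1 : use k+1 stars
      obtain ⟨v, hv⟩ := hbig
      obtain ⟨s, hssub, hscard⟩ := Finset.exists_subset_card_eq hv
      have eqv : {x // x ∈ s} ≃ Fin (k+1) := Finset.equivFinOfCardEq hscard
      have hmemE : ∀ i : Fin (k+1), ((eqv.symm i : {x // x ∈ s}) : Sym2 V) ∈ E :=
        fun i => Finset.mem_of_mem_filter _ (hssub (eqv.symm i).2)
      have hmemv : ∀ i : Fin (k+1), v ∈ ((eqv.symm i : {x // x ∈ s}) : Sym2 V) :=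
        fun i => (Finset.mem_filter.1 (hssub (eqv.symm i).2)).2
      refine ⟨fun i => {((eqv.symm i : {x // x ∈ s}) : Sym2 V)}, ?_, ?_, ?_, ?_, ?_⟩
      · intro i e he
        rw [Set.mem_singleton_iff] at he
        subst he
        exact hmemE i
      · intro i; exact ⟨_, rfl⟩
      · intro i a ha b hb
        rw [Set.mem_singleton_iff] at ha hb
        subst ha; subst hb
        exact Relation.ReflTransGen.refl
      · intro i j hij
        rw [Set.disjoint_singleton_left, Set.mem_singleton_iff]
        intro hcon
        exact hij (eqv.symm.injective (Subtype.ext hcon))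
      · intro i j _
        exact ⟨v, ⟨_, rfl, hmemv i⟩, ⟨_, rfl, hmemv j⟩⟩
    · push_neg at hbig
      obtain ⟨v, hvk⟩ := exists_big_star E k hk hE hcol
      have hstar : (E.filter (fun e => v ∈ e)).card = k := by
        have := hbig v
        omega
      by_cases hcrit : ∀ f ∈ E, ColorableF (E.erase f) k
      · -- critical case
        set star := E.filter (fun e => v ∈ e) with hstardef
        set E' := E.filter (fun e => ¬ v ∈ e) with hE'def
        have hstarE : star ⊆ E := Finset.filter_subset _ _
        have hE'E : E' ⊆ E := Finset.filter_subset _ _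
        have hstar_mem : ∀ e, e ∈ star ↔ (e ∈ E ∧ v ∈ e) := fun e => Finset.mem_filter
        have hE'_mem : ∀ e, e ∈ E' ↔ (e ∈ E ∧ ¬ v ∈ e) := fun e => Finset.mem_filter
        have hsplit : ∀ e ∈ E, e ∈ star ∨ e ∈ E' := by
          intro e he
          by_cases hve : v ∈ e
          · exact Or.inl ((hstar_mem e).2 ⟨he, hve⟩)
          · exact Or.inr ((hE'_mem e).2 ⟨he, hve⟩)
        -- star edges are s(v, u) with u ≠ v
        have hstar_form : ∀ e ∈ star, ∃ u : V, u ≠ v ∧ e = s(v, u) := by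
          intro e he
          have hve : v ∈ e := ((hstar_mem e).1 he).2
          refine ⟨Sym2.Mem.other' hve, ?_, (Sym2.other_spec' hve).symm⟩
          intro hcon
          apply hE e (hstarE he)
          rw [← Sym2.other_spec' hve, hcon, Sym2.mk_isDiag_iff]
        -- uniqueness: a star edge containing u ≠ v equals s(v,u)
        have hstar_uniq : ∀ e ∈ star, ∀ u : V, u ≠ v → u ∈ e → e = s(v, u) := by
          intro e he u hune hue
          exact sym2_eq_of_mem ((hstar_mem e).1 he).2 hue hune
        set comp : Sym2 V → Set (Sym2 V) := fun f₀ =>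
          {f | f ∈ (↑E' : Set (Sym2 V)) ∧
            Relation.ReflTransGen (EC (↑E' : Set (Sym2 V))) f₀ f} with hcompdef
        have hcomp_mem : ∀ f₀ f, f ∈ comp f₀ ↔ (f ∈ (↑E' : Set (Sym2 V)) ∧
            Relation.ReflTransGen (EC (↑E' : Set (Sym2 V))) f₀ f) := by
          intro f₀ f; rfl
        have comp_lift : ∀ f₀, ∀ b,
            Relation.ReflTransGen (EC (↑E' : Set (Sym2 V))) f₀ b →
            Relation.ReflTransGen (EC (comp f₀)) f₀ b := by
          intro f₀ b hb
          induction hb with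
          | refl => exact Relation.ReflTransGen.refl
          | @tail b' c' hab hstep ih2 =>
            exact ih2.tail ⟨⟨hstep.1, hab⟩, ⟨hstep.2.1, hab.tail hstep⟩, hstep.2.2⟩
        have comp_conn : ∀ f₀, ∀ a ∈ comp f₀, ∀ b ∈ comp f₀,
            Relation.ReflTransGen (EC (comp f₀)) a b := by
          intro f₀ a ha b hb
          have hsym : ∀ x y, EC (comp f₀) x y → EC (comp f₀) y x := by
            rintro x y ⟨h1, h2, w, hw1, hw2⟩; exact ⟨h2, h1, w, hw2, hw1⟩
          exact (rtg_symm hsym _ _ (comp_lift f₀ a ha.2)).trans (comp_lift f₀ b hb.2)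
        by_cases hclaim : ∃ f₀ ∈ (↑E' : Set (Sym2 V)), ∀ e ∈ star,
            ∃ f ∈ comp f₀, ∃ w : V, w ∈ e ∧ w ≠ v ∧ w ∈ f
        · -- build the family: k stars and one component
          obtain ⟨f₀, hf₀, hattach⟩ := hclaim
          have eqv : {x // x ∈ star} ≃ Fin k := Finset.equivFinOfCardEq hstar
          set F : Fin (k+1) → Set (Sym2 V) :=
            Fin.lastCases (comp f₀)
              (fun i : Fin k => {((eqv.symm i : {x // x ∈ star}) : Sym2 V)}) with hFdef
          have hFlast : F (Fin.last k) = comp f₀ := by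
            rw [hFdef]; exact Fin.lastCases_last
          have hFcast : ∀ i : Fin k,
              F i.castSucc = {((eqv.symm i : {x // x ∈ star}) : Sym2 V)} := by
            intro i; rw [hFdef]; exact Fin.lastCases_castSucc i
          have hstariE : ∀ i : Fin k, ((eqv.symm i : {x // x ∈ star}) : Sym2 V) ∈ star :=
            fun i => (eqv.symm i).2
          refine ⟨F, ?_, ?_, ?_, ?_, ?_⟩
          · intro i
            refine Fin.lastCases ?_ ?_ i
            · rw [hFlast]
              intro f hf
              exact_mod_cast hE'E (by exact_mod_cast hf.1)
            · intro i'
              rw [hFcast i']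
              intro f hf
              rw [Set.mem_singleton_iff] at hf
              subst hf
              exact_mod_cast hstarE (hstariE i')
          · intro i
            refine Fin.lastCases ?_ ?_ i
            · rw [hFlast]
              exact ⟨f₀, hf₀, Relation.ReflTransGen.refl⟩
            · intro i'
              rw [hFcast i']
              exact ⟨_, rfl⟩
          · intro i
            refine Fin.lastCases ?_ ?_ i
            · rw [hFlast]
              exact comp_conn f₀
            · intro i'
              rw [hFcast i']
              intro a ha b hb
              rw [Set.mem_singleton_iff] at ha hb
              subst ha; subst hb
              exact Relation.ReflTransGen.refl
          · -- pairwise disjoint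
            intro i j hij
            have hcomp_nostar : ∀ (e : Sym2 V), e ∈ comp f₀ → e ∈ star → False := by
              intro e hec hes
              exact ((hE'_mem e).1 (by exact_mod_cast hec.1)).2 ((hstar_mem e).1 hes).2
            induction i using Fin.lastCases with
            | last =>
              induction j using Fin.lastCases with
              | last => exact absurd rfl hij
              | cast j' =>
                rw [hFlast, hFcast j', Set.disjoint_singleton_right]
                intro hcon
                exact hcomp_nostar _ hcon (hstariE j')
            | cast i' =>
              induction j using Fin.lastCases with
              | last =>
                rw [hFlast, hFcast i', Set.disjoint_singleton_left]
                intro hcon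
                exact hcomp_nostar _ hcon (hstariE i')
              | cast j' =>
                rw [hFcast i', hFcast j', Set.disjoint_singleton_left,
                  Set.mem_singleton_iff]
                intro hcon
                apply hij
                rw [eqv.symm.injective (Subtype.ext hcon)]
          · -- pairwise sharing a vertex
            have hshare : ∀ i' : Fin k, ∃ w : V,
                (∃ e ∈ F i'.castSucc, w ∈ e) ∧ (∃ e ∈ F (Fin.last k), w ∈ e) := by
              intro i'
              obtain ⟨f, hf, w, hwe, hwv, hwf⟩ := hattach _ (hstariE i')
              exact ⟨w, ⟨_, by rw [hFcast i']; exact rfl, hwe⟩,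
                ⟨f, by rw [hFlast]; exact hf, hwf⟩⟩
            intro i j hij
            induction i using Fin.lastCases with
            | last =>
              induction j using Fin.lastCases with
              | last => exact absurd rfl hij
              | cast j' =>
                obtain ⟨w, h1, h2⟩ := hshare j'
                exact ⟨w, h2, h1⟩
            | cast i' =>
              induction j using Fin.lastCases with
              | last => exact hshare i'
              | cast j' =>
                refine ⟨v, ⟨_, ?_, ((hstar_mem _).1 (hstariE i')).2⟩,
                        ⟨_, ?_, ((hstar_mem _).1 (hstariE j')).2⟩⟩
                · rw [hFcast i']; exact rfl
                · rw [hFcast j']; exact rfl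
        · -- no attached component: derive a k-colouring, contradiction
          exfalso
          push_neg at hclaim
          by_cases hpend : ∃ e ∈ star, ∀ f ∈ E', ¬ ∃ w : V, w ∈ e ∧ w ≠ v ∧ w ∈ f
          · -- pendant star edge
            obtain ⟨e, he, hiso⟩ := hpend
            obtain ⟨u, hune, hefm⟩ := hstar_form e he
            obtain ⟨C, hC⟩ := hcrit e (hstarE he)
            have hcols : ∃ γ : Fin k, γ ∉ (star.erase e).image C := by
              by_contra hcon
              push_neg at hcon
              have hsub : (Finset.univ : Finset (Fin k)) ⊆ (star.erase e).image C :=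
                fun γ _ => hcon γ
              have h1 := Finset.card_le_card hsub
              have h2 := Finset.card_image_le (s := star.erase e) (f := C)
              have h3 := Finset.card_erase_of_mem he
              rw [Finset.card_univ, Fintype.card_fin] at h1
              omega
            obtain ⟨γ, hγ⟩ := hcols
            apply hcol
            refine ⟨fun f => if f = e then γ else C f, ?_⟩
            rintro f₁ h₁ f₂ h₂ hne ⟨w, hw1, hw2⟩
            have hkey : ∀ f', f' ∈ E → f' ≠ e → ∀ w', w' ∈ e → w' ∈ f' →
                f' ∈ star.erase e := by
              intro f' hf' hfne w' hw'e hw'f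
              by_cases hwv : w' = v
              · subst hwv
                exact Finset.mem_erase.2 ⟨hfne, (hstar_mem f').2 ⟨hf', hw'f⟩⟩
              · exfalso
                rcases hsplit f' hf' with hfs | hfE'
                · have hwu : w' = u := by
                    rw [hefm, Sym2.mem_iff] at hw'e
                    rcases hw'e with h | h
                    · exact absurd h hwv
                    · exact h
                  have h5 : f' = s(v, w') := hstar_uniq f' hfs w' hwv hw'f
                  rw [hwu, ← hefm] at h5
                  exact hfne h5
                · exact hiso f' hfE' ⟨w', hw'e, hwv, hw'f⟩
            show (if f₁ = e then γ else C f₁) ≠ (if f₂ = e then γ else C f₂)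
            by_cases he1 : f₁ = e <;> by_cases he2 : f₂ = e
            · exact absurd (he1.trans he2.symm) hne
            · have hf2 : f₂ ∈ star.erase e := by
                apply hkey f₂ h₂ he2 w _ hw2
                rw [← he1]; exact hw1
              rw [if_pos he1, if_neg he2]
              intro hcon
              exact hγ (hcon ▸ Finset.mem_image_of_mem C hf2)
            · have hf1 : f₁ ∈ star.erase e := by
                apply hkey f₁ h₁ he1 w _ hw1
                rw [← he2]; exact hw2
              rw [if_neg he1, if_pos he2]
              intro hcon
              exact hγ (hcon.symm ▸ Finset.mem_image_of_mem C hf1)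
            · rw [if_neg he1, if_neg he2]
              exact hC f₁ (Finset.mem_erase.2 ⟨he1, h₁⟩) f₂ (Finset.mem_erase.2 ⟨he2, h₂⟩)
                hne ⟨w, hw1, hw2⟩
          · -- no pendant edge : split the graph at v and recolour
            push_neg at hpend
            have hstarpos : ∃ e, e ∈ star := by
              have : 0 < star.card := by rw [hstar]; omega
              exact Finset.card_pos.1 this
            obtain ⟨e₁, he₁⟩ := hstarpos
            obtain ⟨f₀, hf₀E', w₁, hw₁e, hw₁v, hw₁f⟩ := hpend e₁ he₁
            obtain ⟨estar, hestar, hbad⟩ := hclaim f₀ (by exact_mod_cast hf₀E')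
            set cf := comp f₀ with hcfdef
            set starA := star.filter
              (fun e => ∃ f ∈ cf, ∃ w : V, w ∈ e ∧ w ≠ v ∧ w ∈ f) with hstarAdef
            set SA : Set (Sym2 V) := cf ∪ ↑starA with hSAdef
            have hestar_nSA : estar ∉ SA := by
              rintro (h | h)
              · exact ((hE'_mem _).1 (by exact_mod_cast h.1)).2 ((hstar_mem _).1 hestar).2
              · obtain ⟨-, f, hf, w, hw⟩ := Finset.mem_filter.1 (by exact_mod_cast h)
                exact hbad f hf w hw.1 hw.2.1 hw.2.2
            have he₁A : e₁ ∈ starA := Finset.mem_filter.2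
              ⟨he₁, ⟨f₀, ⟨hf₀E', Relation.ReflTransGen.refl⟩, w₁, hw₁e, hw₁v, hw₁f⟩⟩
            obtain ⟨CA, hCA⟩ := hcrit estar (hstarE hestar)
            obtain ⟨CB, hCB⟩ := hcrit e₁ (hstarE he₁)
            have hsep : ∀ a ∈ SA, ∀ b ∈ E, b ∉ SA → ∀ w : V, w ∈ a → w ∈ b → w = v := by
              intro a ha b hb hbn w hwa hwb
              by_contra hwv
              rcases ha with hacomp | hastar
              · rcases hsplit b hb with hbs | hbE'
                · refine hbn (Or.inr ?_)
                  have hbA : b ∈ starA :=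
                    Finset.mem_filter.2 ⟨hbs, ⟨a, hacomp, w, hwb, hwv, hwa⟩⟩
                  exact_mod_cast hbA
                · exact hbn (Or.inl ⟨(by exact_mod_cast hbE' : b ∈ (↑E' : Set (Sym2 V))),
                    hacomp.2.tail ⟨hacomp.1,
                      (by exact_mod_cast hbE' : b ∈ (↑E' : Set (Sym2 V))), w, hwa, hwb⟩⟩)
              · have hastar' : a ∈ star :=
                  (Finset.mem_filter.1 (by exact_mod_cast hastar)).1
                obtain ⟨f, hfcf, wa, hwaa, hwav, hwaf⟩ :=
                  (Finset.mem_filter.1 (by exact_mod_cast hastar)).2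
                have hwwa : w = wa := by
                  have h1 : a = s(v, w) := hstar_uniq a hastar' w hwv hwa
                  have h2 : a = s(v, wa) := hstar_uniq a hastar' wa hwav hwaa
                  rw [h1, Sym2.eq_iff] at h2
                  rcases h2 with ⟨-, h⟩ | ⟨-, h4⟩
                  · exact h
                  · exact absurd h4 hwv
                rcases hsplit b hb with hbs | hbE'
                · have hb1 : b = s(v, w) := hstar_uniq b hbs w hwv hwb
                  have ha1 : a = s(v, w) := hstar_uniq a hastar' w hwv hwa
                  apply hbn
                  rw [hb1, ← ha1]
                  exact Or.inr hastar
                · apply hbn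
                  refine Or.inl ⟨(by exact_mod_cast hbE' : b ∈ (↑E' : Set (Sym2 V))),
                    hfcf.2.tail ⟨hfcf.1,
                      (by exact_mod_cast hbE' : b ∈ (↑E' : Set (Sym2 V))), w, ?_, hwb⟩⟩
                  rw [hwwa]; exact hwaf
            set colsA := starA.image CA with hcolsAdef
            set colsB := (star \ starA).image CB with hcolsBdef
            have hcards : colsA.card + colsB.card ≤ k := by
              have h1 : colsA.card ≤ starA.card := Finset.card_image_le
              have h2 : colsB.card ≤ (star \ starA).card := Finset.card_image_le
              have h3 : (star \ starA).card = star.card - starA.card :=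
                Finset.card_sdiff_of_subset (Finset.filter_subset _ _)
              have h4 : starA.card ≤ star.card :=
                Finset.card_le_card (Finset.filter_subset _ _)
              omega
            obtain ⟨σ, hσ⟩ := perm_avoid k colsA colsB hcards
            apply hcol
            refine ⟨fun f => if f ∈ SA then CA f else σ (CB f), ?_⟩
            rintro f₁ h₁ f₂ h₂ hne ⟨w, hw1, hw2⟩
            have hAstar : ∀ f', f' ∈ SA → v ∈ f' → f' ∈ starA := by
              intro f' hf' hvf'
              rcases hf' with h | h
              · exact absurd hvf' ((hE'_mem f').1 (by exact_mod_cast h.1)).2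
              · exact_mod_cast h
            show (if f₁ ∈ SA then CA f₁ else σ (CB f₁)) ≠
              (if f₂ ∈ SA then CA f₂ else σ (CB f₂))
            by_cases hA1 : f₁ ∈ SA <;> by_cases hA2 : f₂ ∈ SA
            · rw [if_pos hA1, if_pos hA2]
              refine hCA f₁ (Finset.mem_erase.2 ⟨?_, h₁⟩) f₂ (Finset.mem_erase.2 ⟨?_, h₂⟩)
                hne ⟨w, hw1, hw2⟩
              · rintro rfl; exact hestar_nSA hA1
              · rintro rfl; exact hestar_nSA hA2
            · rw [if_pos hA1, if_neg hA2]
              have hwv : w = v := hsep f₁ hA1 f₂ h₂ hA2 w hw1 hw2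
              subst hwv
              have hf₁A : f₁ ∈ starA := hAstar f₁ hA1 hw1
              have hf₂B : f₂ ∈ star \ starA := Finset.mem_sdiff.2
                ⟨(hstar_mem f₂).2 ⟨h₂, hw2⟩,
                 fun hcon => hA2 (Or.inr (by exact_mod_cast hcon))⟩
              intro hcon
              have hmem2 : CB f₂ ∈ colsB := Finset.mem_image_of_mem CB hf₂B
              have := hσ _ hmem2
              rw [← hcon] at this
              exact this (Finset.mem_image_of_mem CA hf₁A)
            · rw [if_neg hA1, if_pos hA2]
              have hwv : w = v := hsep f₂ hA2 f₁ h₁ hA1 w hw2 hw1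
              subst hwv
              have hf₂A : f₂ ∈ starA := hAstar f₂ hA2 hw2
              have hf₁B : f₁ ∈ star \ starA := Finset.mem_sdiff.2
                ⟨(hstar_mem f₁).2 ⟨h₁, hw1⟩,
                 fun hcon => hA1 (Or.inr (by exact_mod_cast hcon))⟩
              intro hcon
              have hmem1 : CB f₁ ∈ colsB := Finset.mem_image_of_mem CB hf₁B
              have := hσ _ hmem1
              rw [hcon] at this
              exact this (Finset.mem_image_of_mem CA hf₂A)
            · rw [if_neg hA1, if_neg hA2]
              intro hcon
              have hinj2 := σ.injective hcon
              refine hCB f₁ (Finset.mem_erase.2 ⟨?_, h₁⟩) f₂ (Finset.mem_erase.2 ⟨?_, h₂⟩)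
                hne ⟨w, hw1, hw2⟩ hinj2
              · rintro rfl; exact hA1 (Or.inr (by exact_mod_cast he₁A))
              · rintro rfl; exact hA2 (Or.inr (by exact_mod_cast he₁A))
      · -- non-critical: recurse
        push_neg at hcrit
        obtain ⟨f, hfE, hfcol⟩ := hcrit
        have h1 : (E.erase f).card ≤ n := by
          have h2 := Finset.card_erase_of_mem hfE
          have h3 := Finset.card_pos.2 ⟨f, hfE⟩
          omega
        exact GoodFam_mono (Finset.erase_subset f E)
          (ih (E.erase f) h1 (fun e he => hE e (Finset.mem_of_mem_erase he)) hfcol)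


end ChromAux

/-- a simple graph `H` with `χ'(H) ≥ t` contains `t` connected
subgraphs, each with at least one edge, pairwise edge-disjoint but pairwise
sharing at least one vertex. -/
theorem simple_chromIndex_subgraphs {V : Type} (H : SimpleGraph V) (t : ℕ)
    (hchi : ∀ n < t, ¬ (SimpleGraph.toMG H).EdgeColorable n) :
    ∃ F : Fin t → Set (SimpleGraph.toMG H).E,
      (∀ i, (F i).Nonempty) ∧
      (∀ i, (SimpleGraph.toMG H).ConnEdges (F i)) ∧
      (Pairwise fun i j => Disjoint (F i) (F j)) ∧
      (∀ i j, i ≠ j → ∃ v, (∃ e ∈ F i, v ∈ (SimpleGraph.toMG H).ends e) ∧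
        (∃ e ∈ F j, v ∈ (SimpleGraph.toMG H).ends e)) := by
  classical
  have hval : ∀ e : (SimpleGraph.toMG H).E, (SimpleGraph.toMG H).ends e ∈ H.edgeSet :=
    fun e => e.2
  have hmk : ∀ (a : Sym2 V) (ha : a ∈ H.edgeSet),
      (SimpleGraph.toMG H).ends (⟨a, ha⟩ : (SimpleGraph.toMG H).E) = a := fun a ha => rfl
  rcases Nat.eq_zero_or_pos t with rfl | ht
  · exact ⟨fun i => i.elim0, fun i => i.elim0, fun i => i.elim0,
      fun i j _ => i.elim0, fun i => i.elim0⟩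
  have hedge : ∃ e : Sym2 V, e ∈ H.edgeSet := by
    by_contra hcon
    push_neg at hcon
    apply hchi 0 ht
    exact ⟨fun e => absurd (hval e) (hcon _), fun e f _ _ => absurd (hval e) (hcon _)⟩
  rcases Nat.lt_or_ge t 2 with ht2 | ht2
  · -- t = 1
    have ht1 : t = 1 := by omega
    subst ht1
    obtain ⟨e, he⟩ := hedge
    refine ⟨fun _ => {(⟨e, he⟩ : (SimpleGraph.toMG H).E)}, ?_, ?_, ?_, ?_⟩
    · intro i; exact ⟨_, rfl⟩
    · intro i a ha b hb
      replace ha : a = ⟨e, he⟩ := ha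
      replace hb : b = ⟨e, he⟩ := hb
      subst ha; subst hb
      exact Relation.ReflTransGen.refl
    · intro i j hij; exact absurd (Subsingleton.elim i j) hij
    · intro i j hij; exact absurd (Subsingleton.elim i j) hij
  · -- t ≥ 2
    set k := t - 1 with hkdef
    have hk1 : 1 ≤ k := by omega
    have hkt : k + 1 = t := by omega
    have hcolk : ¬ (SimpleGraph.toMG H).EdgeColorable k := hchi k (by omega)
    by_cases hfin : ∃ E₀ : Finset (Sym2 V), (↑E₀ ⊆ H.edgeSet) ∧ ¬ ChromAux.ColorableF E₀ k
    · obtain ⟨E₀, hsub, hncol⟩ := hfin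
      have hnd : ∀ e ∈ E₀, ¬ e.IsDiag := fun e he =>
        H.not_isDiag_of_mem_edgeSet (hsub he)
      have hgf : ChromAux.GoodFam E₀ t := by
        rw [← hkt]
        exact ChromAux.main_finite k hk1 E₀.card E₀ le_rfl hnd hncol
      obtain ⟨F, hFsub, hFne, hFconn, hFdisj, hFshare⟩ := hgf
      have hFedge : ∀ (i : Fin t) (a : Sym2 V), a ∈ F i → a ∈ H.edgeSet :=
        fun i a ha => hsub (hFsub i ha)
      refine ⟨fun i => {e : (SimpleGraph.toMG H).E |
        (SimpleGraph.toMG H).ends e ∈ F i}, ?_, ?_, ?_, ?_⟩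
      · intro i
        obtain ⟨a, ha⟩ := hFne i
        refine ⟨⟨a, hFedge i a ha⟩, ?_⟩
        show (SimpleGraph.toMG H).ends ⟨a, hFedge i a ha⟩ ∈ F i
        rw [hmk]
        exact ha
      · -- connectivity
        intro i e he f hf
        have key : ∀ q : Sym2 V,
            Relation.ReflTransGen (ChromAux.EC (F i)) ((SimpleGraph.toMG H).ends e) q →
            q ∈ F i → ∃ hq : q ∈ H.edgeSet,
              Relation.ReflTransGen
                (fun a b => a ∈ {e : (SimpleGraph.toMG H).E |
                    (SimpleGraph.toMG H).ends e ∈ F i} ∧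
                  b ∈ {e : (SimpleGraph.toMG H).E |
                    (SimpleGraph.toMG H).ends e ∈ F i} ∧
                  ∃ v, v ∈ (SimpleGraph.toMG H).ends a ∧ v ∈ (SimpleGraph.toMG H).ends b)
                e ⟨q, hq⟩ := by
          intro q hq hqF
          induction hq with
          | refl =>
            refine ⟨hval e, ?_⟩
            have heq : (⟨(SimpleGraph.toMG H).ends e, hval e⟩ : (SimpleGraph.toMG H).E)
                = e := rfl
            rw [heq]
          | @tail b' c' hab hstep ih =>
            obtain ⟨hb', hrtg⟩ := ih hstep.1
            refine ⟨hFedge i c' hstep.2.1, ?_⟩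
            refine hrtg.tail ⟨?_, ?_, ?_⟩
            · show (SimpleGraph.toMG H).ends ⟨b', hb'⟩ ∈ F i
              rw [hmk]; exact hstep.1
            · show (SimpleGraph.toMG H).ends ⟨c', hFedge i c' hstep.2.1⟩ ∈ F i
              rw [hmk]; exact hstep.2.1
            · rw [hmk, hmk]
              exact hstep.2.2
        have hconn := hFconn i _ he _ hf
        obtain ⟨hq, hrtg⟩ := key ((SimpleGraph.toMG H).ends f) hconn hf
        have heq : (⟨(SimpleGraph.toMG H).ends f, hq⟩ : (SimpleGraph.toMG H).E) = f :=
          Subtype.ext rfl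
        rwa [heq] at hrtg
      · intro i j hij
        rw [Set.disjoint_left]
        intro e hei hej
        exact (Set.disjoint_left.1 (hFdisj hij)) hei hej
      · intro i j hij
        obtain ⟨w, ⟨a, haF, hwa⟩, ⟨b, hbF, hwb⟩⟩ := hFshare i j hij
        refine ⟨w, ⟨⟨a, hFedge i a haF⟩, ?_, ?_⟩, ⟨⟨b, hFedge j b hbF⟩, ?_, ?_⟩⟩
        · show (SimpleGraph.toMG H).ends ⟨a, hFedge i a haF⟩ ∈ F i
          rw [hmk]; exact haF
        · rw [hmk]; exact hwa
        · show (SimpleGraph.toMG H).ends ⟨b, hFedge j b hbF⟩ ∈ F j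
          rw [hmk]; exact hbF
        · rw [hmk]; exact hwb
    · -- compactness : all finite pieces colourable implies H colourable
      exfalso
      push_neg at hfin
      apply hcolk
      set L : SimpleGraph (SimpleGraph.toMG H).E :=
        { Adj := fun e f => e ≠ f ∧ ∃ v : V, v ∈ (SimpleGraph.toMG H).ends e ∧
            v ∈ (SimpleGraph.toMG H).ends f,
          symm := ⟨by
            rintro e f ⟨h1, v, h2, h3⟩
            exact ⟨h1.symm, v, h3, h2⟩⟩,
          loopless := ⟨by rintro e ⟨h1, -⟩; exact h1 rfl⟩ } with hLdef
      have hhom : ∀ G' : L.Subgraph, G'.verts.Finite →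
          G'.coe →g (⊤ : SimpleGraph (Fin k)) := by
        intro G' hfinv
        have hfinE : ((fun e : (SimpleGraph.toMG H).E =>
            ((SimpleGraph.toMG H).ends e : Sym2 V)) '' G'.verts : Set (Sym2 V)).Finite :=
          hfinv.image _
        have hsubE : ↑hfinE.toFinset ⊆ H.edgeSet := by
          intro x hx
          rw [Set.Finite.coe_toFinset] at hx
          obtain ⟨e, -, rfl⟩ := hx
          exact hval e
        have hex := hfin hfinE.toFinset hsubE
        set C := hex.choose with hCdef
        have hC := hex.choose_spec
        refine ⟨fun a => C ((SimpleGraph.toMG H).ends a.1), ?_⟩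
        rintro a b hab
        have hadj : L.Adj a.1 b.1 := G'.adj_sub hab
        obtain ⟨hne, v, hv1, hv2⟩ := hadj
        have hmema : ((SimpleGraph.toMG H).ends a.1 : Sym2 V) ∈ hfinE.toFinset := by
          refine hfinE.mem_toFinset.2 ?_
          exact ⟨a.1, a.2, rfl⟩
        have hmemb : ((SimpleGraph.toMG H).ends b.1 : Sym2 V) ∈ hfinE.toFinset := by
          refine hfinE.mem_toFinset.2 ?_
          exact ⟨b.1, b.2, rfl⟩
        have hne2 : ((SimpleGraph.toMG H).ends a.1 : Sym2 V) ≠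
            ((SimpleGraph.toMG H).ends b.1 : Sym2 V) := by
          intro hcon
          exact hne (Subtype.ext hcon)
        have := hC _ hmema _ hmemb hne2 ⟨v, hv1, hv2⟩
        simpa using this
      haveI : Finite (Fin k) := Finite.of_fintype _
      obtain ⟨g⟩ := SimpleGraph.nonempty_hom_of_forall_finite_subgraph_hom hhom
      refine ⟨fun e => g e, ?_⟩
      intro e f hne hshare
      have : (⊤ : SimpleGraph (Fin k)).Adj (g e) (g f) := g.map_rel ⟨hne, hshare⟩
      simpa using this
end

section
/- There exists a graph G (with 6 vertices) that has a K_4-immersion but no K_4-minor; consequently, having a K_4-immersion does not imply having a K_4-minor for general graphs. Such a G is necessarily not a line graph. -/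
/-- The 6-vertex graph of Figure 4: vertices `u=0, v=1, w=2, x=3, y=4, z=5`
and edges `xv, vz, zy, yx, vy, xu, uv, vw, wz`. -/
def fig4 : MG where
  V := Fin 6
  E := Fin 9
  ends := ![s(3, 1), s(1, 5), s(5, 4), s(4, 3), s(1, 4), s(3, 0), s(0, 1), s(1, 2), s(2, 5)]
  noLoop := by decide


lemma isoRefl (G : MG) : MG.Iso G G :=
  ⟨Equiv.refl _, Equiv.refl _, fun e => by simp⟩

lemma subRefl (G : MG) : MG.IsSubgraphOf G G :=
  ⟨Function.Embedding.refl _, Function.Embedding.refl _, fun e => by simp⟩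

def G1 : MG := fig4.splitOff (5:Fin 9) (6:Fin 9) (3:Fin 6) (1:Fin 6) (by decide : (3:Fin 6) ≠ 1)
abbrev E1 : Type := {e : Fin 9 // e ≠ 5 ∧ e ≠ 6} ⊕ Unit
def a1 : E1 := Sum.inr ()
def b1 : E1 := Sum.inl ⟨7, by decide⟩
def G2 : MG := G1.splitOff a1 b1 (3:Fin 6) (2:Fin 6) (by decide : (3:Fin 6) ≠ 2)
abbrev E2 : Type := {e : E1 // e ≠ a1 ∧ e ≠ b1} ⊕ Unit
def a2 : E2 := Sum.inr ()
def b2 : E2 := Sum.inl ⟨Sum.inl ⟨8, by decide⟩, by decide⟩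
def G3 : MG := G2.splitOff a2 b2 (3:Fin 6) (5:Fin 6) (by decide : (3:Fin 6) ≠ 5)
abbrev E3 : Type := {e : E2 // e ≠ a2 ∧ e ≠ b2} ⊕ Unit
instance : Fintype E2 := inferInstance
instance : Fintype E3 := inferInstance
instance : DecidableEq E3 :=
  letI : DecidableEq {e : E2 // e ≠ a2 ∧ e ≠ b2} := inferInstance
  inferInstanceAs (DecidableEq ({e : E2 // e ≠ a2 ∧ e ≠ b2} ⊕ Unit))

def ends3 : E3 → Sym2 (Fin 6) := G3.ends
def ends0 : Fin 9 → Sym2 (Fin 6) := fig4.ends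
def ends1 : E1 → Sym2 (Fin 6) := G1.ends
def ends2 : E2 → Sym2 (Fin 6) := G2.ends

def old3 (i : Fin 9) (h5 : i ≠ 5) (h6 : i ≠ 6) (h7 : i ≠ 7) (h8 : i ≠ 8) : E3 :=
  Sum.inl ⟨Sum.inl ⟨Sum.inl ⟨i, h5, h6⟩,
    ⟨by simp [a1], by simp only [b1, ne_eq, Sum.inl.injEq, Subtype.mk.injEq]; exact h7⟩⟩,
    ⟨by simp [a2], by simp only [b2, ne_eq, Sum.inl.injEq, Subtype.mk.injEq]; exact h8⟩⟩

abbrev KE := (⊤ : SimpleGraph (Fin 4)).edgeSet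

def g (e : KE) : E3 :=
  if e.1 = s(0,1) then old3 0 (by decide) (by decide) (by decide) (by decide)
  else if e.1 = s(0,2) then old3 4 (by decide) (by decide) (by decide) (by decide)
  else if e.1 = s(0,3) then old3 1 (by decide) (by decide) (by decide) (by decide)
  else if e.1 = s(1,2) then old3 3 (by decide) (by decide) (by decide) (by decide)
  else if e.1 = s(1,3) then Sum.inr ()
  else old3 2 (by decide) (by decide) (by decide) (by decide)

lemma hg : Function.Bijective g := by decide

def fv4 : Fin 4 → Fin 6 := ![1,3,4,5]

lemma fv4inj : Function.Injective fv4 := by decide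

lemma hends : ∀ e : KE, ends3 (g e) = Sym2.map fv4 e.1 := by decide

lemma isolated : ∀ v : Fin 6, v ≠ 1 → v ≠ 3 → v ≠ 4 → v ≠ 5 → ∀ e : E3, v ∉ ends3 e := by
  decide

lemma step1 : MG.SplitStep fig4 G1 :=
  ⟨(5:Fin 9), (6:Fin 9), (3:Fin 6), (0:Fin 6), (1:Fin 6), (by decide : (3:Fin 6) ≠ 1),
   (by decide : (5:Fin 9) ≠ 6),
   (by decide : ends0 5 = s(3,0)), (by decide : ends0 6 = s(0,1)), isoRefl G1⟩

lemma step2 : MG.SplitStep G1 G2 :=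
  ⟨a1, b1, (3:Fin 6), (1:Fin 6), (2:Fin 6), (by decide : (3:Fin 6) ≠ 2),
   (by decide : a1 ≠ b1),
   (by decide : ends1 a1 = s(3,1)), (by decide : ends1 b1 = s(1,2)), isoRefl G2⟩

lemma step3 : MG.SplitStep G2 G3 :=
  ⟨a2, b2, (3:Fin 6), (2:Fin 6), (5:Fin 6), (by decide : (3:Fin 6) ≠ 5),
   (by decide : a2 ≠ b2),
   (by decide : ends2 a2 = s(3,2)), (by decide : ends2 b2 = s(2,5)), isoRefl G3⟩

lemma immersionK4 : fig4.Immersion (completeMG 4) := by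
  refine ⟨fig4, G3, subRefl fig4,
    (Relation.ReflTransGen.single step1).tail step2 |>.tail step3,
    ⟨fv4, fv4inj⟩, Equiv.ofBijective g hg, fun e => hends e, ?_⟩
  intro v hv e
  exact isolated v (fun h => hv ⟨(0:Fin 4), by subst h; rfl⟩)
    (fun h => hv ⟨(1:Fin 4), by subst h; rfl⟩)
    (fun h => hv ⟨(2:Fin 4), by subst h; rfl⟩)
    (fun h => hv ⟨(3:Fin 4), by subst h; rfl⟩) e

/-! ### No K4 minor -/

def pos : Fin 6 → ℕ := ![0, 100, 4, 1, 2, 3]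

lemma adjpos : ∀ a b : Fin 6, a ≠ 1 → b ≠ 1 → (∃ e : Fin 9, ends0 e = s(a, b)) →
    (pos a = pos b + 1 ∨ pos b = pos a + 1) := by decide

lemma posinj : ∀ a b : Fin 6, pos a ≤ 4 → pos b ≤ 4 → pos a = pos b → a = b := by decide

lemma posle : ∀ a : Fin 6, a ≠ 1 → pos a ≤ 4 := by decide

lemma ne_one_of_mem {S : Set (Fin 6)} (h1 : (1 : Fin 6) ∉ S) {x : Fin 6} (hx : x ∈ S) :
    x ≠ 1 := fun h => h1 (h ▸ hx)

lemma interval {S : Set (Fin 6)} (h1 : (1 : Fin 6) ∉ S) {a b : Fin 6}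
    (h : Relation.ReflTransGen (fun x y => x ∈ S ∧ y ∈ S ∧ fig4.Adjv x y) a b)
    (ha : a ∈ S) :
    ∀ c : Fin 6, min (pos a) (pos b) ≤ pos c → pos c ≤ max (pos a) (pos b) → c ∈ S := by
  induction h with
  | refl =>
    intro c hc1 hc2
    have hpa : pos a ≤ 4 := posle a (ne_one_of_mem h1 ha)
    have : c = a := posinj c a (by omega) hpa (by omega)
    exact this ▸ ha
  | @tail y b hy hstep ih =>
    intro c hc1 hc2
    obtain ⟨hyS, hbS, e, he⟩ := hstep
    have hpy : pos y ≤ 4 := posle y (ne_one_of_mem h1 hyS)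
    have hpb : pos b ≤ 4 := posle b (ne_one_of_mem h1 hbS)
    have hpa : pos a ≤ 4 := posle a (ne_one_of_mem h1 ha)
    have hadj : pos y = pos b + 1 ∨ pos b = pos y + 1 :=
      adjpos y b (ne_one_of_mem h1 hyS) (ne_one_of_mem h1 hbS) ⟨e, he⟩
    by_cases hc : pos c = pos b
    · exact (posinj c b (by omega) hpb hc) ▸ hbS
    · exact ih c (by omega) (by omega)

lemma three {A B C : Set (Fin 6)} (hA1 : (1:Fin 6) ∉ A) (hB1 : (1:Fin 6) ∉ B)
    (hC1 : (1:Fin 6) ∉ C)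
    (hcA : fig4.ConnIn A) (hcB : fig4.ConnIn B) (hcC : fig4.ConnIn C)
    (dAB : Disjoint A B) (dAC : Disjoint A C) (dBC : Disjoint B C)
    (eAB : ∃ a ∈ A, ∃ b ∈ B, fig4.Adjv a b)
    (eAC : ∃ a ∈ A, ∃ c ∈ C, fig4.Adjv a c)
    (eBC : ∃ b ∈ B, ∃ c ∈ C, fig4.Adjv b c) : False := by
  obtain ⟨x1, hx1, y1, hy1, ad1⟩ := eAB
  obtain ⟨x2, hx2, z2, hz2, ad2⟩ := eAC
  obtain ⟨y3, hy3, z3, hz3, ad3⟩ := eBC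
  have IA := interval hA1 (hcA x1 hx1 x2 hx2) hx1
  have IB := interval hB1 (hcB y1 hy1 y3 hy3) hy1
  have IC := interval hC1 (hcC z2 hz2 z3 hz3) hz2
  have p1 := adjpos x1 y1 (ne_one_of_mem hA1 hx1) (ne_one_of_mem hB1 hy1) ad1
  have p2 := adjpos x2 z2 (ne_one_of_mem hA1 hx2) (ne_one_of_mem hC1 hz2) ad2
  have p3 := adjpos y3 z3 (ne_one_of_mem hB1 hy3) (ne_one_of_mem hC1 hz3) ad3
  have bx1 := posle x1 (ne_one_of_mem hA1 hx1)
  have bx2 := posle x2 (ne_one_of_mem hA1 hx2)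
  have by1 := posle y1 (ne_one_of_mem hB1 hy1)
  have by3 := posle y3 (ne_one_of_mem hB1 hy3)
  have bz2 := posle z2 (ne_one_of_mem hC1 hz2)
  have bz3 := posle z3 (ne_one_of_mem hC1 hz3)
  -- non-containment facts
  have nAB1 : ¬ (min (pos y1) (pos y3) ≤ pos x1 ∧ pos x1 ≤ max (pos y1) (pos y3)) :=
    fun ⟨u, v⟩ => Set.disjoint_left.mp dAB hx1 (IB x1 u v)
  have nAB2 : ¬ (min (pos y1) (pos y3) ≤ pos x2 ∧ pos x2 ≤ max (pos y1) (pos y3)) :=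
    fun ⟨u, v⟩ => Set.disjoint_left.mp dAB hx2 (IB x2 u v)
  have nBA1 : ¬ (min (pos x1) (pos x2) ≤ pos y1 ∧ pos y1 ≤ max (pos x1) (pos x2)) :=
    fun ⟨u, v⟩ => Set.disjoint_left.mp dAB (IA y1 u v) hy1
  have nBA2 : ¬ (min (pos x1) (pos x2) ≤ pos y3 ∧ pos y3 ≤ max (pos x1) (pos x2)) :=
    fun ⟨u, v⟩ => Set.disjoint_left.mp dAB (IA y3 u v) hy3
  have nAC1 : ¬ (min (pos z2) (pos z3) ≤ pos x1 ∧ pos x1 ≤ max (pos z2) (pos z3)) :=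
    fun ⟨u, v⟩ => Set.disjoint_left.mp dAC hx1 (IC x1 u v)
  have nAC2 : ¬ (min (pos z2) (pos z3) ≤ pos x2 ∧ pos x2 ≤ max (pos z2) (pos z3)) :=
    fun ⟨u, v⟩ => Set.disjoint_left.mp dAC hx2 (IC x2 u v)
  have nCA1 : ¬ (min (pos x1) (pos x2) ≤ pos z2 ∧ pos z2 ≤ max (pos x1) (pos x2)) :=
    fun ⟨u, v⟩ => Set.disjoint_left.mp dAC (IA z2 u v) hz2
  have nCA2 : ¬ (min (pos x1) (pos x2) ≤ pos z3 ∧ pos z3 ≤ max (pos x1) (pos x2)) :=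
    fun ⟨u, v⟩ => Set.disjoint_left.mp dAC (IA z3 u v) hz3
  have nBC1 : ¬ (min (pos z2) (pos z3) ≤ pos y1 ∧ pos y1 ≤ max (pos z2) (pos z3)) :=
    fun ⟨u, v⟩ => Set.disjoint_left.mp dBC hy1 (IC y1 u v)
  have nBC2 : ¬ (min (pos z2) (pos z3) ≤ pos y3 ∧ pos y3 ≤ max (pos z2) (pos z3)) :=
    fun ⟨u, v⟩ => Set.disjoint_left.mp dBC hy3 (IC y3 u v)
  have nCB1 : ¬ (min (pos y1) (pos y3) ≤ pos z2 ∧ pos z2 ≤ max (pos y1) (pos y3)) :=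
    fun ⟨u, v⟩ => Set.disjoint_left.mp dBC (IB z2 u v) hz2
  have nCB2 : ¬ (min (pos y1) (pos y3) ≤ pos z3 ∧ pos z3 ≤ max (pos y1) (pos y3)) :=
    fun ⟨u, v⟩ => Set.disjoint_left.mp dBC (IB z3 u v) hz3
  omega

lemma noMinor : ¬ fig4.Minor (completeMG 4) := by
  rintro ⟨β, hne, hconn, hdisj, η, hη⟩
  have epair : ∀ i j : Fin 4, i ≠ j → ∃ a ∈ β i, ∃ b ∈ β j, fig4.Adjv a b := by
    intro i j hij
    have hmem : s(i, j) ∈ (⊤ : SimpleGraph (Fin 4)).edgeSet := by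
      rw [SimpleGraph.mem_edgeSet]; exact hij
    obtain ⟨a, ha, b, hb, hab⟩ := hη ⟨s(i, j), hmem⟩ i j rfl
    exact ⟨a, ha, b, hb, η ⟨s(i, j), hmem⟩, hab⟩
  have key : ∀ i j k : Fin 4, i ≠ j → i ≠ k → j ≠ k →
      (1:Fin 6) ∉ β i → (1:Fin 6) ∉ β j → (1:Fin 6) ∉ β k → False := by
    intro i j k hij hik hjk h1 h2 h3
    exact three h1 h2 h3 (hconn i) (hconn j) (hconn k)
      (hdisj hij) (hdisj hik) (hdisj hjk)
      (epair i j hij) (epair i k hik) (epair j k hjk)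
  have hd : ∀ i j : Fin 4, i ≠ j → (1:Fin 6) ∈ β i → (1:Fin 6) ∉ β j :=
    fun i j hij h1 h2 => Set.disjoint_left.mp (hdisj hij) h1 h2
  by_cases h0 : (1:Fin 6) ∈ β ((0:Fin 4))
  · exact key 1 2 3 (by decide) (by decide) (by decide)
      (hd 0 1 (by decide) h0) (hd 0 2 (by decide) h0) (hd 0 3 (by decide) h0)
  by_cases h1 : (1:Fin 6) ∈ β ((1:Fin 4))
  · exact key 0 2 3 (by decide) (by decide) (by decide) h0
      (hd 1 2 (by decide) h1) (hd 1 3 (by decide) h1)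
  by_cases h2 : (1:Fin 6) ∈ β ((2:Fin 4))
  · exact key 0 1 3 (by decide) (by decide) (by decide) h0 h1 (hd 2 3 (by decide) h2)
  by_cases h3 : (1:Fin 6) ∈ β ((3:Fin 4))
  · exact key 0 1 2 (by decide) (by decide) (by decide) h0 h1 h2
  · exact key 0 1 2 (by decide) (by decide) (by decide) h0 h1 h2

/-! ### Not a line graph -/

lemma noedge02 : ¬ (∃ e : Fin 9, ends0 e = s(0, 2)) := by decide
lemma noedge04 : ¬ (∃ e : Fin 9, ends0 e = s(0, 4)) := by decide
lemma noedge24 : ¬ (∃ e : Fin 9, ends0 e = s(2, 4)) := by decide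

lemma edge6 : ends0 6 = s(0, 1) := by decide
lemma edge7 : ends0 7 = s(1, 2) := by decide
lemma edge4 : ends0 4 = s(1, 4) := by decide

lemma toMG_ends_mem {V : Type} (G : SimpleGraph V) (e : G.edgeSet) :
    (SimpleGraph.toMG G).ends e ∈ G.edgeSet := e.2

lemma noLineGraph : ¬ ∃ H : MG, MG.Iso fig4 (SimpleGraph.toMG H.lineGraph) := by
  rintro ⟨H, fv, fe, hiso⟩
  have fwd : ∀ (i : Fin 9) (a b : Fin 6), ends0 i = s(a, b) →
      H.lineGraph.Adj (fv a) (fv b) := by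
    intro i a b h
    have h' : fig4.ends i = s(a, b) := h
    have h2 := hiso i
    rw [h'] at h2
    replace h2 : (SimpleGraph.toMG H.lineGraph).ends (fe i) = s(fv a, fv b) := h2
    have hmem := toMG_ends_mem H.lineGraph (fe i)
    rw [h2] at hmem
    exact hmem
  have bwd : ∀ (a b : Fin 6), ¬ (∃ e : Fin 9, ends0 e = s(a, b)) →
      ¬ H.lineGraph.Adj (fv a) (fv b) := by
    intro a b hne hadj
    have hmem : s(fv a, fv b) ∈ H.lineGraph.edgeSet := hadj
    set x : (SimpleGraph.toMG H.lineGraph).E := ⟨s(fv a, fv b), hmem⟩ with hx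
    have h2 := hiso (fe.symm x)
    rw [Equiv.apply_symm_apply] at h2
    have h3 : Sym2.map (⇑fv) (fig4.ends (fe.symm x)) = s(fv a, fv b) := h2.symm
    rw [← Sym2.map_pair_eq (⇑fv) a b] at h3
    have h4 : fig4.ends (fe.symm x) = s(a, b) := Sym2.map.injective fv.injective h3
    exact hne ⟨fe.symm x, h4⟩
  have a10 := (fwd 6 0 1 edge6).symm
  have a12 := fwd 7 1 2 edge7
  have a14 := fwd 4 1 4 edge4
  have n02 := bwd 0 2 noedge02
  have n04 := bwd 0 4 noedge04
  have n24 := bwd 2 4 noedge24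
  obtain ⟨ne0, v0, w0, w0'⟩ := a10
  obtain ⟨ne2, v2, w2, w2'⟩ := a12
  obtain ⟨ne4, v4, w4, w4'⟩ := a14
  obtain ⟨⟨x, y⟩, hq⟩ := Quot.exists_rep (H.ends (fv (1 : Fin 6)))
  have hxy : H.ends (fv (1 : Fin 6)) = s(x, y) := hq.symm
  rw [hxy, Sym2.mem_iff] at w0 w2 w4
  have hne02 : fv (0:Fin 6) ≠ fv (2:Fin 6) := fun h => absurd (fv.injective h) (by decide : ¬ ((0:Fin 6) = (2:Fin 6)))
  have hne04 : fv (0:Fin 6) ≠ fv (4:Fin 6) := fun h => absurd (fv.injective h) (by decide : ¬ ((0:Fin 6) = (4:Fin 6)))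
  have hne24 : fv (2:Fin 6) ≠ fv (4:Fin 6) := fun h => absurd (fv.injective h) (by decide : ¬ ((2:Fin 6) = (4:Fin 6)))
  rcases w0 with rfl | rfl <;> rcases w2 with rfl | rfl <;> rcases w4 with rfl | rfl
  all_goals first
    | exact n02 ⟨hne02, _, w0', w2'⟩
    | exact n04 ⟨hne04, _, w0', w4'⟩
    | exact n24 ⟨hne24, _, w2', w4'⟩

/-- there is a graph on 6 vertices with a `K₄`-immersion but no
`K₄`-minor; hence `K₄`-immersion does not imply `K₄`-minor in general. Such a
graph is necessarily not a line graph. -/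
theorem K4_immersion_not_minor_example :
    fig4.Immersion (completeMG 4) ∧
    ¬ fig4.Minor (completeMG 4) ∧
    (¬ ∀ G : MG, G.Immersion (completeMG 4) → G.Minor (completeMG 4)) ∧
    (¬ ∃ H : MG, MG.Iso fig4 (SimpleGraph.toMG H.lineGraph)) :=
  ⟨immersionK4, noMinor, fun hall => noMinor (hall fig4 immersionK4), noLineGraph⟩
end
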